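/- Let R be an integral domain, C̃ and C̃' S-complexes over R, and i, j ∈ ℤ. Then J_i(C̃)·J_j(C̃') ⊆ J_{i+j}(C̃ ⊗ C̃'). -/

import Mathlib

/-!  S-complexes over a commutative ring `R` (following Daemi–Scaduto).

An S-complex is a ℤ-graded finitely generated free chain complex
`C̃ = C ⊕ C[1] ⊕ R` determined by the data of `C` together with maps
`d, v, δ₁, δ₂`.  We encode the graded module `C` by a single module `Tot`
together with an internal ℤ-grading by submodules, and we carry the sign
map `ε` (multiplication by `(-1)^i` on the degree `i` part) as data. -/

universe u

/-- The data of an S-complex over `R`: a module `Tot` (the total module of the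
ℤ-graded module `C_*`), its grading, the sign map `ε`, and the structure maps
`d : C_* → C_{*-1}`, `v : C_* → C_{*-2}`, `δ₁ : C_* → R` (supported in degree 1),
`δ₂ : R → C_{-2}`. -/
structure SComplexData (R : Type u) [CommRing R] where
  Tot : Type u
  [acg : AddCommGroup Tot]
  [mod : Module R Tot]
  grading : ℤ → Submodule R Tot
  sign : Tot →ₗ[R] Tot
  d : Tot →ₗ[R] Tot
  v : Tot →ₗ[R] Tot
  δ₁ : Tot →ₗ[R] R
  δ₂ : R →ₗ[R] Tot

attribute [instance] SComplexData.acg SComplexData.mod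

namespace SComplexData

variable {R : Type u} [CommRing R]

/-- The axioms making the data of `X : SComplexData R` into a genuine S-complex:
the grading is an internal direct sum decomposition into finitely generated free
pieces, the sign map is `(-1)^i` on the degree `i` piece, the structure maps are
graded of the appropriate degrees (`δ₁` supported on `C_1`, `δ₂` valued in `C_{-2}`),
and the S-complex relations `d∘d = 0`, `δ₁∘d = 0`, `d∘δ₂ = 0`,
`d∘v − v∘d − δ₂∘δ₁ = 0` hold; the latter are equivalent to `d̃ ∘ d̃ = 0` for the
differential `d̃(α, β, r) = (dα, vα − dβ + δ₂ r, δ₁ α)` on `C̃ = C ⊕ C[1] ⊕ R`. -/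
structure IsSComplex (X : SComplexData R) : Prop where
  internal : DirectSum.IsInternal X.grading
  free : ∀ i : ℤ, Module.Free R ↥(X.grading i)
  finite : Module.Finite R X.Tot
  sign_spec : ∀ i : ℤ, ∀ x ∈ X.grading i, X.sign x = if Even i then x else -x
  d_deg : ∀ i : ℤ, (X.grading i).map X.d ≤ X.grading (i - 1)
  v_deg : ∀ i : ℤ, (X.grading i).map X.v ≤ X.grading (i - 2)
  δ₁_deg : ∀ i : ℤ, i ≠ 1 → ∀ x ∈ X.grading i, X.δ₁ x = 0
  δ₂_deg : LinearMap.range X.δ₂ ≤ X.grading (-2)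
  d_d : X.d ∘ₗ X.d = 0
  δ₁_d : X.δ₁ ∘ₗ X.d = 0
  d_δ₂ : X.d ∘ₗ X.δ₂ = 0
  d_v : X.d ∘ₗ X.v - X.v ∘ₗ X.d - X.δ₂ ∘ₗ X.δ₁ = 0

/-- A morphism of S-complexes `λ̃ : C̃ → C̃'`, i.e. a degree-0 chain map
`λ̃(α, β, r) = (λ α, μ α + λ β + Δ₂ r, Δ₁ α + r)`, recorded through its
components `λ, μ, Δ₁, Δ₂` (here `l` stands for `λ`). -/
structure SMorphism (X Y : SComplexData R) where
  l : X.Tot →ₗ[R] Y.Tot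
  μ : X.Tot →ₗ[R] Y.Tot
  Δ₁ : X.Tot →ₗ[R] R
  Δ₂ : R →ₗ[R] Y.Tot
  l_deg : ∀ i : ℤ, (X.grading i).map l ≤ Y.grading i
  μ_deg : ∀ i : ℤ, (X.grading i).map μ ≤ Y.grading (i - 1)
  Δ₁_deg : ∀ i : ℤ, i ≠ 0 → ∀ x ∈ X.grading i, Δ₁ x = 0
  Δ₂_deg : LinearMap.range Δ₂ ≤ Y.grading (-1)
  comm_d : l ∘ₗ X.d = Y.d ∘ₗ l
  comm_δ₁ : Δ₁ ∘ₗ X.d + X.δ₁ = Y.δ₁ ∘ₗ l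
  comm_δ₂ : Y.d ∘ₗ Δ₂ + l ∘ₗ X.δ₂ = Y.δ₂
  comm_v : μ ∘ₗ X.d + Y.d ∘ₗ μ + l ∘ₗ X.v - Y.v ∘ₗ l + Δ₂ ∘ₗ X.δ₁ - Y.δ₂ ∘ₗ Δ₁ = 0

end SComplexData

/-- Functions `ℕ → M` with finitely many nonzero values (i.e. support bounded
above); this realizes the polynomial module `M[x]`. -/
def NatBdd (R : Type u) [CommRing R] (M : Type u) [AddCommGroup M] [Module R M] :
    Submodule R (ℕ → M) where
  carrier := {f | ∃ N : ℕ, ∀ n : ℕ, N < n → f n = 0}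
  add_mem' := by
    rintro f g ⟨N, hN⟩ ⟨K, hK⟩
    refine ⟨max N K, fun n hn => ?_⟩
    have h1 := hN n (lt_of_le_of_lt (le_max_left N K) hn)
    have h2 := hK n (lt_of_le_of_lt (le_max_right N K) hn)
    show f n + g n = 0
    rw [h1, h2, add_zero]
  zero_mem' := ⟨0, fun _ _ => rfl⟩
  smul_mem' := by
    rintro c f ⟨N, hN⟩
    refine ⟨N, fun n hn => ?_⟩
    show c • f n = 0
    rw [hN n hn, smul_zero]

/-- Functions `ℤ → M` with support bounded above; for `M = R` this realizes the
ring `R[[x⁻¹, x]]` of Laurent series with finitely many positive powers of `x`. -/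
def IntBdd (R : Type u) [CommRing R] (M : Type u) [AddCommGroup M] [Module R M] :
    Submodule R (ℤ → M) where
  carrier := {f | ∃ N : ℤ, ∀ n : ℤ, N < n → f n = 0}
  add_mem' := by
    rintro f g ⟨N, hN⟩ ⟨K, hK⟩
    refine ⟨max N K, fun n hn => ?_⟩
    have h1 := hN n (lt_of_le_of_lt (le_max_left N K) hn)
    have h2 := hK n (lt_of_le_of_lt (le_max_right N K) hn)
    show f n + g n = 0
    rw [h1, h2, add_zero]
  zero_mem' := ⟨0, fun _ _ => rfl⟩
  smul_mem' := by
    rintro c f ⟨N, hN⟩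
    refine ⟨N, fun n hn => ?_⟩
    show c • f n = 0
    rw [hN n hn, smul_zero]

/-- The multiplication of `R[[x⁻¹, x]]`, realized as a convolution product on
functions `ℤ → R` with support bounded above. -/
noncomputable def lmul {R : Type u} [CommRing R] (f g : ↥(IntBdd R R)) : ↥(IntBdd R R) :=
  ⟨fun n => ∑ᶠ i : ℤ, f.1 i * g.1 (n - i), by
    obtain ⟨N, hN⟩ := f.2
    obtain ⟨K, hK⟩ := g.2
    refine ⟨N + K, fun n hn => ?_⟩
    apply finsum_eq_zero_of_forall_eq_zero
    intro i
    by_cases h : N < i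
    · rw [hN i h, zero_mul]
    · rw [hK (n - i) (by omega), mul_zero]⟩

namespace SComplexData

variable {R : Type u} [CommRing R]

/-- The carrier of the small equivariant complex `𝔣Ĉ_* = C_{*-1} ⊕ R[x]`,
with `R[x]` realized as finitely supported functions `ℕ → R`. -/
abbrev Small (X : SComplexData R) : Type u := X.Tot × ↥(NatBdd R R)

/-- `Σᵢ vⁱ δ₂(aᵢ)` for a polynomial with coefficients `aᵢ`. -/
noncomputable def sumV (X : SComplexData R) (f : ↥(NatBdd R R)) : X.Tot :=
  ∑ᶠ i : ℕ, (X.v ^ i) (X.δ₂ (f.1 i))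

/-- The differential `𝔡̂(α, Σᵢ aᵢxⁱ) = (dα − Σᵢ vⁱδ₂(aᵢ), 0)` of the small
equivariant complex. -/
noncomputable def smallD (X : SComplexData R) : X.Small → X.Small :=
  fun z => (X.d z.1 - X.sumV z.2, 0)

/-- The `R[x]`-module structure of the small equivariant complex:
`x · (α, p(x)) = (v(α), δ₁(α) + x·p(x))`; this is the action of `x`. -/
noncomputable def xSmall (X : SComplexData R) : X.Small → X.Small :=
  fun z => (X.v z.1, ⟨fun n => if n = 0 then X.δ₁ z.1 else z.2.1 (n - 1), by
    obtain ⟨N, hN⟩ := z.2.2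
    refine ⟨N + 1, fun n hn => ?_⟩
    show (if n = 0 then X.δ₁ z.1 else z.2.1 (n - 1)) = 0
    rw [if_neg (by omega)]
    exact hN (n - 1) (by omega)⟩)

/-- The map `𝔦 : 𝔣Ĉ_* → R[[x⁻¹, x]]`,
`𝔦(α, Σᵢ aᵢxⁱ) = Σ_{i ≤ −1} δ₁v^{−i−1}(α) xⁱ + Σᵢ aᵢxⁱ`. -/
noncomputable def iota (X : SComplexData R) : X.Small → ↥(IntBdd R R) :=
  fun z => ⟨fun n => if n < 0 then X.δ₁ ((X.v ^ (-n - 1).toNat) z.1) else z.2.1 n.toNat, by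
    obtain ⟨N, hN⟩ := z.2.2
    refine ⟨(N : ℤ), fun n hn => ?_⟩
    show (if n < 0 then X.δ₁ ((X.v ^ (-n - 1).toNat) z.1) else z.2.1 n.toNat) = 0
    rw [if_neg (by omega)]
    exact hN n.toNat (by omega)⟩

/-- `𝔍(C̃) = 𝔦(ker 𝔡̂)`, an `R[x]`-submodule of `R[[x⁻¹, x]]`, here recorded
as a set. -/
noncomputable def JJ (X : SComplexData R) : Set ↥(IntBdd R R) :=
  X.iota '' {z | X.smallD z = 0}

/-- `DegEq Q n` means that the Laurent series `Q` is nonzero with `Deg Q = n`,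
i.e. `n` is the largest exponent with nonzero coefficient. -/
def DegEq {R : Type u} [CommRing R] (Q : ↥(IntBdd R R)) (n : ℤ) : Prop :=
  Q.1 n ≠ 0 ∧ ∀ m : ℤ, n < m → Q.1 m = 0

/-- The set of degrees of nonzero elements of `𝔍(C̃)`. -/
noncomputable def degSet (X : SComplexData R) : Set ℤ :=
  {n : ℤ | ∃ Q ∈ X.JJ, DegEq Q n}

/-- The Frøyshov invariant `h(C̃) = −inf {Deg Q : 0 ≠ Q ∈ 𝔍(C̃)}`. -/
noncomputable def hInv (X : SComplexData R) : ℤ := -sInf X.degSet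

/-- The ideal `J_i(C̃) = {a ∈ R : ∃ Q = a·x^{−i} + (lower order terms) ∈ 𝔍(C̃)}`,
recorded as a set. -/
noncomputable def Jideal (X : SComplexData R) (i : ℤ) : Set R :=
  {a : R | ∃ Q ∈ X.JJ, (∀ m : ℤ, -i < m → Q.1 m = 0) ∧ Q.1 (-i) = a}

end SComplexData

namespace SComplexData

open TensorProduct

variable {R : Type u} [CommRing R]

/-- The carrier of the tensor product S-complex:
`C^⊗ = (C ⊗ C') ⊕ (C ⊗ C')[1] ⊕ C ⊕ C'`. -/
abbrev TTen (A B : SComplexData R) : Type u :=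
  (A.Tot ⊗[R] B.Tot) × (A.Tot ⊗[R] B.Tot) × A.Tot × B.Tot

/-- Projection onto the first summand `(C ⊗ C')` of `C^⊗`. -/
noncomputable def tp1 (A B : SComplexData R) : TTen A B →ₗ[R] A.Tot ⊗[R] B.Tot :=
  LinearMap.fst R _ _

/-- Projection onto the second summand `(C ⊗ C')[1]` of `C^⊗`. -/
noncomputable def tp2 (A B : SComplexData R) : TTen A B →ₗ[R] A.Tot ⊗[R] B.Tot :=
  (LinearMap.fst R _ _) ∘ₗ (LinearMap.snd R _ _)

/-- Projection onto the third summand `C` of `C^⊗`. -/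
noncomputable def tp3 (A B : SComplexData R) : TTen A B →ₗ[R] A.Tot :=
  (LinearMap.fst R _ _) ∘ₗ (LinearMap.snd R _ _) ∘ₗ (LinearMap.snd R _ _)

/-- Projection onto the fourth summand `C'` of `C^⊗`. -/
noncomputable def tp4 (A B : SComplexData R) : TTen A B →ₗ[R] B.Tot :=
  (LinearMap.snd R _ _) ∘ₗ (LinearMap.snd R _ _) ∘ₗ (LinearMap.snd R _ _)

/-- The degree `k` piece of the grading of `C ⊗ C'`:
the span of the images of `C_i ⊗ C'_{k-i}`. -/
noncomputable def gradedPiece (A B : SComplexData R) (k : ℤ) :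
    Submodule R (A.Tot ⊗[R] B.Tot) :=
  ⨆ i : ℤ, LinearMap.range
    (TensorProduct.map (A.grading i).subtype (B.grading (k - i)).subtype)

/-- The tensor product S-complex `C̃ ⊗ C̃'` of two S-complexes, with chain module
`C^⊗ = (C ⊗ C') ⊕ (C ⊗ C')[1] ⊕ C ⊕ C'` and the block-matrix structure maps of
Daemi–Scaduto (Section 4.5); `ε` denotes the sign map. -/
noncomputable def tensorS (A B : SComplexData R) : SComplexData R where
  Tot := TTen A B
  grading := fun k =>
    (gradedPiece A B k).prod ((gradedPiece A B (k - 1)).prod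
      ((A.grading k).prod (B.grading k)))
  sign := LinearMap.prod
      ((TensorProduct.map A.sign B.sign) ∘ₗ tp1 A B)
      (LinearMap.prod (-((TensorProduct.map A.sign B.sign) ∘ₗ tp2 A B))
        (LinearMap.prod (A.sign ∘ₗ tp3 A B) (B.sign ∘ₗ tp4 A B)))
  d := LinearMap.prod
      -- row 1 :  (d⊗1 + ε⊗d') x₁
      ((TensorProduct.map A.d LinearMap.id + TensorProduct.map A.sign B.d) ∘ₗ tp1 A B)
      (LinearMap.prod
        -- row 2 : (−εv⊗1 + ε⊗v') x₁ + (d⊗1 − ε⊗d') x₂ + (ε⊗δ₂') x₃ − (δ₂⊗1) x₄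
        ((TensorProduct.map A.sign B.v - TensorProduct.map (A.sign ∘ₗ A.v) LinearMap.id) ∘ₗ tp1 A B
          + (TensorProduct.map A.d LinearMap.id - TensorProduct.map A.sign B.d) ∘ₗ tp2 A B
          + ((TensorProduct.map A.sign B.δ₂) ∘ₗ (TensorProduct.rid R A.Tot).symm.toLinearMap) ∘ₗ tp3 A B
          - ((TensorProduct.map A.δ₂ LinearMap.id) ∘ₗ (TensorProduct.lid R B.Tot).symm.toLinearMap) ∘ₗ tp4 A B)
        (LinearMap.prod
          -- row 3 : (ε⊗δ₁') x₁ + d x₃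
          (((TensorProduct.rid R A.Tot).toLinearMap ∘ₗ TensorProduct.map A.sign B.δ₁) ∘ₗ tp1 A B
            + A.d ∘ₗ tp3 A B)
          -- row 4 : (δ₁⊗1) x₁ + d' x₄
          (((TensorProduct.lid R B.Tot).toLinearMap ∘ₗ TensorProduct.map A.δ₁ LinearMap.id) ∘ₗ tp1 A B
            + B.d ∘ₗ tp4 A B)))
  v := LinearMap.prod
      -- row 1 : (v⊗1) x₁ + (δ₂⊗1) x₄
      ((TensorProduct.map A.v LinearMap.id) ∘ₗ tp1 A B
        + ((TensorProduct.map A.δ₂ LinearMap.id) ∘ₗ (TensorProduct.lid R B.Tot).symm.toLinearMap) ∘ₗ tp4 A B)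
      (LinearMap.prod
        -- row 2 : (v⊗1) x₂
        ((TensorProduct.map A.v LinearMap.id) ∘ₗ tp2 A B)
        (LinearMap.prod
          -- row 3 : v x₃
          (A.v ∘ₗ tp3 A B)
          -- row 4 : (δ₁⊗1) x₂ + v' x₄
          (((TensorProduct.lid R B.Tot).toLinearMap ∘ₗ TensorProduct.map A.δ₁ LinearMap.id) ∘ₗ tp2 A B
            + B.v ∘ₗ tp4 A B)))
  δ₁ := A.δ₁ ∘ₗ tp3 A B + B.δ₁ ∘ₗ tp4 A B
  δ₂ := LinearMap.prod 0 (LinearMap.prod 0 (LinearMap.prod A.δ₂ B.δ₂))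

end SComplexData

namespace SC10

open Finset

section Finsets
variable {R : Type u} [CommRing R] {M : Type*} [AddCommMonoid M]

lemma sqToTri (K : ℕ) (F : ℕ → ℕ → M) (hF : ∀ k m, K ≤ k + m + 1 → F k m = 0) :
    ∑ k ∈ range K, ∑ m ∈ range K, F k m
      = ∑ n ∈ range K, ∑ k ∈ range (n + 1), F k (n - k) := by
  have h1 : ∀ k ∈ range K, ∑ m ∈ range K, F k m = ∑ m ∈ range (K - k), F k m := by
    intro k hk
    refine (Finset.sum_subset (by intro m hm; simp only [mem_range] at hm ⊢; omega) ?_).symm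
    intro m hm hm'
    simp only [mem_range] at hm hm'
    exact hF k m (by omega)
  rw [Finset.sum_congr rfl h1, ← Finset.sum_range_diag_flip]

lemma triRe (K : ℕ) (H : ℕ → ℕ → M) (hH : ∀ t p, K ≤ t → H t p = 0) :
    ∑ t ∈ range K, ∑ p ∈ range t, H t p
      = ∑ p ∈ range K, ∑ q ∈ range K, H (p + q + 1) p := by
  rw [sqToTri K (fun p q => H (p + q + 1) p) (fun k m h => hH _ _ (by omega))]
  have h2 : ∀ n ∈ range K, ∑ k ∈ range (n + 1), H (k + (n - k) + 1) k
      = ∑ k ∈ range (n + 1), H (n + 1) k := by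
    intro n hn
    refine Finset.sum_congr rfl fun k hk => ?_
    simp only [mem_range] at hk
    congr 1
    omega
  rw [Finset.sum_congr rfl h2]
  cases K with
  | zero => simp
  | succ K' =>
    rw [Finset.sum_range_succ' (fun t => ∑ p ∈ range t, H t p) K',
      Finset.sum_range_succ (fun n => ∑ k ∈ range (n + 1), H (n + 1) k) K']
    simp only [range_zero, sum_empty, add_zero]
    rw [Finset.sum_eq_zero (fun k _ => hH _ _ (by omega)), add_zero]

lemma convSplit (F G : ℕ → R) (p q : ℕ) :
    ∑ s ∈ range (p + q + 2), F s * G (p + q + 1 - s)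
      = (∑ m ∈ range (p + 1), F (p - m) * G (q + m + 1))
        + ∑ m ∈ range (q + 1), F (p + m + 1) * G (q - m) := by
  have hpq : p + q + 2 = (p + 1) + (q + 1) := by omega
  rw [hpq, Finset.sum_range_add]
  congr 1
  · rw [← Finset.sum_range_reflect]
    refine Finset.sum_congr rfl fun m hm => ?_
    simp only [mem_range] at hm
    have h1 : p + 1 - 1 - m = p - m := by omega
    rw [h1]
    have h2 : p + q + 1 - (p - m) = q + m + 1 := by omega
    rw [h2]
  · refine Finset.sum_congr rfl fun m hm => ?_
    simp only [mem_range] at hm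
    have h1 : p + 1 + m = p + m + 1 := by omega
    have h2 : p + q + 1 - (p + m + 1) = q - m := by omega
    rw [h1, h2]

end Finsets

section SC
variable {R : Type u} [CommRing R] {A : SComplexData R}

/-- `uu A k = v^k (δ₂ 1)`. -/
noncomputable def uu (A : SComplexData R) (k : ℕ) : A.Tot := (A.v ^ k) (A.δ₂ 1)

lemma uu_zero (A : SComplexData R) : uu A 0 = A.δ₂ 1 := by simp [uu]

lemma uu_succ (A : SComplexData R) (k : ℕ) : uu A (k + 1) = A.v (uu A k) := by
  rw [uu, uu, pow_succ', Module.End.mul_apply]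

lemma v_uu (A : SComplexData R) (t k : ℕ) : (A.v ^ t) (uu A k) = uu A (t + k) := by
  rw [uu, uu, ← Module.End.mul_apply, ← pow_add]

lemma δ₂_eq_smul (A : SComplexData R) (r : R) : A.δ₂ r = r • uu A 0 := by
  rw [uu_zero, ← map_smul, smul_eq_mul, mul_one]

lemma d_v_apply (hA : A.IsSComplex) (x : A.Tot) :
    A.d (A.v x) = A.v (A.d x) + A.δ₂ (A.δ₁ x) := by
  have h := LinearMap.ext_iff.mp hA.d_v x
  simp only [LinearMap.sub_apply, LinearMap.comp_apply, LinearMap.zero_apply] at h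
  rw [sub_eq_zero] at h
  rw [sub_eq_iff_eq_add] at h
  rw [h, add_comm]

lemma δ₁_d_apply (hA : A.IsSComplex) (x : A.Tot) : A.δ₁ (A.d x) = 0 := by
  have h := LinearMap.ext_iff.mp hA.δ₁_d x
  simpa using h

lemma d_δ₂_apply (hA : A.IsSComplex) (r : R) : A.d (A.δ₂ r) = 0 := by
  have h := LinearMap.ext_iff.mp hA.d_δ₂ r
  simpa using h

lemma uu_mem (hA : A.IsSComplex) (k : ℕ) : uu A k ∈ A.grading (-2 * (k : ℤ) - 2) := by
  induction k with
  | zero =>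
    have h : A.δ₂ 1 ∈ A.grading (-2) := hA.δ₂_deg ⟨1, rfl⟩
    rw [uu_zero]
    have e : (-2 * ((0:ℕ) : ℤ) - 2) = -2 := by norm_num
    rw [e]
    exact h
  | succ k ih =>
    have h : A.v (uu A k) ∈ A.grading (-2 * (k : ℤ) - 2 - 2) :=
      hA.v_deg _ (Submodule.mem_map_of_mem ih)
    rw [uu_succ]
    convert h using 2
    push_cast
    ring

lemma sign_uu (hA : A.IsSComplex) (k : ℕ) : A.sign (uu A k) = uu A k := by
  rw [hA.sign_spec _ _ (uu_mem hA k), if_pos ⟨-(k : ℤ) - 1, by ring⟩]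

lemma δ₁_uu (hA : A.IsSComplex) (k : ℕ) : A.δ₁ (uu A k) = 0 :=
  hA.δ₁_deg _ (by omega) _ (uu_mem hA k)

lemma d_uu (hA : A.IsSComplex) (k : ℕ) : A.d (uu A k) = 0 := by
  induction k with
  | zero => rw [uu_zero]; exact d_δ₂_apply hA 1
  | succ k ih =>
    rw [uu_succ, d_v_apply hA, ih, map_zero, zero_add, δ₁_uu hA, map_zero]

open Finset in
lemma d_pow (hA : A.IsSComplex) (x : A.Tot) (m : ℕ) :
    A.d ((A.v ^ m) x)
      = (A.v ^ m) (A.d x) + ∑ p ∈ range m, A.δ₁ ((A.v ^ (m - 1 - p)) x) • uu A p := by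
  induction m with
  | zero => simp
  | succ m ih =>
    have h1 : (A.v ^ (m + 1)) x = A.v ((A.v ^ m) x) := by
      rw [pow_succ', Module.End.mul_apply]
    rw [h1, d_v_apply hA, ih, map_add, map_sum]
    have h2 : ∀ p, A.v (A.δ₁ ((A.v ^ (m - 1 - p)) x) • uu A p)
        = A.δ₁ ((A.v ^ (m - 1 - p)) x) • uu A (p + 1) := by
      intro p; rw [map_smul, ← uu_succ]
    rw [Finset.sum_congr rfl (fun p _ => h2 p)]
    rw [Finset.sum_range_succ' (fun p => A.δ₁ ((A.v ^ (m + 1 - 1 - p)) x) • uu A p) m]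
    have h3 : ∀ p ∈ range m, A.δ₁ ((A.v ^ (m + 1 - 1 - (p + 1))) x) • uu A (p + 1)
        = A.δ₁ ((A.v ^ (m - 1 - p)) x) • uu A (p + 1) := by
      intro p hp
      simp only [mem_range] at hp
      have e : m + 1 - 1 - (p + 1) = m - 1 - p := by omega
      rw [e]
    rw [Finset.sum_congr rfl h3]
    have h4 : A.v ((A.v ^ m) (A.d x)) = (A.v ^ (m + 1)) (A.d x) := by
      rw [pow_succ', Module.End.mul_apply]
    rw [δ₂_eq_smul, h4]
    have h5 : m + 1 - 1 - 0 = m := by omega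
    rw [h5]
    abel

end SC

section Tensor
open SComplexData TensorProduct Finset

variable {R : Type u} [CommRing R] (A B : SComplexData R)

lemma prod_sum4 {ι M1 M2 M3 M4 : Type*} [AddCommMonoid M1] [AddCommMonoid M2]
    [AddCommMonoid M3] [AddCommMonoid M4] (s : Finset ι)
    (f1 : ι → M1) (f2 : ι → M2) (f3 : ι → M3) (f4 : ι → M4) :
    (∑ x ∈ s, ((f1 x, f2 x, f3 x, f4 x) : M1 × M2 × M3 × M4))
      = (∑ x ∈ s, f1 x, ∑ x ∈ s, f2 x, ∑ x ∈ s, f3 x, ∑ x ∈ s, f4 x) := by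
  refine Prod.ext ?_ (Prod.ext ?_ (Prod.ext ?_ ?_)) <;>
    simp [Prod.fst_sum, Prod.snd_sum]

lemma tensorS_δ₂_apply (r : R) :
    (tensorS A B).δ₂ r = (0, 0, A.δ₂ r, B.δ₂ r) := rfl

lemma tensorS_δ₁_apply (z : TTen A B) :
    (tensorS A B).δ₁ z = A.δ₁ z.2.2.1 + B.δ₁ z.2.2.2 := rfl

lemma tensorS_v_apply (z : TTen A B) :
    (tensorS A B).v z =
      (TensorProduct.map A.v LinearMap.id z.1
          + TensorProduct.map A.δ₂ LinearMap.id ((TensorProduct.lid R B.Tot).symm z.2.2.2),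
        TensorProduct.map A.v LinearMap.id z.2.1,
        A.v z.2.2.1,
        (TensorProduct.lid R B.Tot) (TensorProduct.map A.δ₁ LinearMap.id z.2.1)
          + B.v z.2.2.2) := rfl

lemma tensorS_d_apply (z : TTen A B) :
    (tensorS A B).d z =
      (TensorProduct.map A.d LinearMap.id z.1 + TensorProduct.map A.sign B.d z.1,
        (TensorProduct.map A.sign B.v z.1
            - TensorProduct.map (A.sign ∘ₗ A.v) LinearMap.id z.1)
          + (TensorProduct.map A.d LinearMap.id z.2.1
              - TensorProduct.map A.sign B.d z.2.1)
          + TensorProduct.map A.sign B.δ₂ ((TensorProduct.rid R A.Tot).symm z.2.2.1)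
          - TensorProduct.map A.δ₂ LinearMap.id ((TensorProduct.lid R B.Tot).symm z.2.2.2),
        (TensorProduct.rid R A.Tot) (TensorProduct.map A.sign B.δ₁ z.1) + A.d z.2.2.1,
        (TensorProduct.lid R B.Tot) (TensorProduct.map A.δ₁ LinearMap.id z.1)
          + B.d z.2.2.2) := rfl

/-- The first component of `(v^⊗)^k δ₂^⊗`. -/
noncomputable def Sc (k : ℕ) : A.Tot ⊗[R] B.Tot :=
  ∑ p ∈ range k, uu A p ⊗ₜ[R] uu B (k - 1 - p)

lemma Sc_succ (k : ℕ) :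
    Sc A B (k + 1)
      = TensorProduct.map A.v LinearMap.id (Sc A B k) + uu A 0 ⊗ₜ[R] uu B k := by
  have h1 : ∀ p ∈ range k, uu A (p + 1) ⊗ₜ[R] uu B (k + 1 - 1 - (p + 1))
      = TensorProduct.map A.v LinearMap.id (uu A p ⊗ₜ[R] uu B (k - 1 - p)) := by
    intro p hp
    simp only [mem_range] at hp
    rw [TensorProduct.map_tmul, LinearMap.id_coe, id_eq, ← uu_succ]
    have e : k + 1 - 1 - (p + 1) = k - 1 - p := by omega
    rw [e]
  rw [Sc, Finset.sum_range_succ' (fun p => uu A p ⊗ₜ[R] uu B (k + 1 - 1 - p)) k,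
    Finset.sum_congr rfl h1, ← map_sum, ← Sc]
  have e2 : k + 1 - 1 - 0 = k := by omega
  rw [e2]

lemma pow_v_δ₂ (r : R) (k : ℕ) :
    ((tensorS A B).v ^ k) ((tensorS A B).δ₂ r)
      = (r • Sc A B k, 0, r • uu A k, r • uu B k) := by
  induction k with
  | zero =>
    simp only [pow_zero, Module.End.one_apply, tensorS_δ₂_apply, Sc, range_zero,
      sum_empty, smul_zero]
    rw [δ₂_eq_smul A r, δ₂_eq_smul B r]
    rfl
  | succ k ih =>
    have h1 : ((tensorS A B).v ^ (k + 1)) ((tensorS A B).δ₂ r)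
        = (tensorS A B).v (((tensorS A B).v ^ k) ((tensorS A B).δ₂ r)) := by
      rw [pow_succ', Module.End.mul_apply]
    rw [h1, ih, tensorS_v_apply]
    refine Prod.ext ?_ (Prod.ext ?_ (Prod.ext ?_ ?_))
    · show TensorProduct.map A.v LinearMap.id (r • Sc A B k)
          + TensorProduct.map A.δ₂ LinearMap.id
            ((TensorProduct.lid R B.Tot).symm (r • uu B k)) = r • Sc A B (k + 1)
      simp only [Sc_succ, map_smul, smul_add, TensorProduct.lid_symm_apply,
        TensorProduct.map_tmul, LinearMap.id_coe, id_eq, uu_zero]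
    · show TensorProduct.map A.v LinearMap.id (0 : A.Tot ⊗[R] B.Tot) = (0 : A.Tot ⊗[R] B.Tot)
      simp
    · show A.v (r • uu A k) = r • uu A (k + 1)
      rw [map_smul, uu_succ]
    · show (TensorProduct.lid R B.Tot) (TensorProduct.map A.δ₁ LinearMap.id
          (0 : A.Tot ⊗[R] B.Tot)) + B.v (r • uu B k) = r • uu B (k + 1)
      rw [map_zero, map_zero, zero_add, map_smul, uu_succ]

lemma sumV_eq (C : SComplexData R) (f : ↥(NatBdd R R)) (K : ℕ)
    (hb : ∀ n : ℕ, K ≤ n → f.1 n = 0) :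
    C.sumV f = ∑ k ∈ range K, f.1 k • uu C k := by
  rw [SComplexData.sumV]
  rw [finsum_eq_sum_of_support_subset _ (s := range K) ?_]
  · refine Finset.sum_congr rfl fun k _ => ?_
    rw [δ₂_eq_smul, map_smul, v_uu, Nat.add_zero]
  · intro k hk
    simp only [Function.mem_support, ne_eq, coe_range, Set.mem_Iio] at hk ⊢
    by_contra h
    exact hk (by rw [hb k (by omega), map_zero, map_zero])

lemma tensorS_sumV (h : ↥(NatBdd R R)) (K : ℕ) (hb : ∀ n : ℕ, K ≤ n → h.1 n = 0) :
    (tensorS A B).sumV h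
      = (∑ k ∈ range K, h.1 k • Sc A B k, 0,
          ∑ k ∈ range K, h.1 k • uu A k, ∑ k ∈ range K, h.1 k • uu B k) := by
  rw [SComplexData.sumV]
  rw [finsum_eq_sum_of_support_subset _ (s := range K) ?_]
  · rw [Finset.sum_congr rfl (fun k _ => pow_v_δ₂ A B (h.1 k) k)]
    erw [prod_sum4]
    congr 1
    simp
  · intro k hk
    simp only [Function.mem_support, ne_eq, coe_range, Set.mem_Iio] at hk ⊢
    by_contra hc
    exact hk (by rw [hb k (by omega), map_zero, map_zero])

end Tensor

section Witness
open SComplexData TensorProduct Finset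

variable {R : Type u} [CommRing R] (A B : SComplexData R)

/-- First component of the witness cycle. -/
noncomputable def xOne (α : A.Tot) (β : B.Tot) (F G : ℕ → R) (K : ℕ) :
    A.Tot ⊗[R] B.Tot :=
  (∑ k ∈ range K, ∑ m ∈ range K, F (k + m + 1) • (uu A k ⊗ₜ[R] (B.v ^ m) β))
    + ∑ k ∈ range K, ∑ m ∈ range K, G (k + m + 1) • ((A.v ^ m) α ⊗ₜ[R] uu B k)

/-- Third (resp. fourth) component of the witness cycle. -/
noncomputable def xThree (α : A.Tot) (G : ℕ → R) (K : ℕ) : A.Tot :=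
  ∑ t ∈ range K, G t • (A.v ^ t) α

/-- The polynomial part of the witness. -/
noncomputable def hFun (α : A.Tot) (β : B.Tot) (F G : ℕ → R) (K : ℕ) : ℕ → R :=
  fun n =>
    (∑ s ∈ range (n + 1), F s * G (n - s))
      + (∑ q ∈ range K, A.δ₁ ((A.v ^ q) α) * G (n + q + 1))
      + (∑ q ∈ range K, F (n + q + 1) * B.δ₁ ((B.v ^ q) β))

variable {A B}

lemma d_pow_exp (hA : A.IsSComplex) (α : A.Tot) (F : ℕ → R) (K : ℕ)
    (hdα : A.d α = ∑ s ∈ range K, F s • uu A s) (m : ℕ) :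
    A.d ((A.v ^ m) α)
      = (∑ s ∈ range K, F s • uu A (m + s))
        + ∑ p ∈ range m, A.δ₁ ((A.v ^ (m - 1 - p)) α) • uu A p := by
  rw [d_pow hA, hdα, map_sum]
  congr 1
  exact Finset.sum_congr rfl fun s _ => by rw [map_smul, v_uu]

lemma hFun_vanish (α : A.Tot) (β : B.Tot) (F G : ℕ → R) (NF NG K : ℕ)
    (hF : ∀ s : ℕ, NF < s → F s = 0) (hG : ∀ t : ℕ, NG < t → G t = 0)
    (n : ℕ) (hn : NF + NG < n) : hFun A B α β F G K n = 0 := by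
  unfold hFun
  have e1 : ∑ s ∈ range (n + 1), F s * G (n - s) = 0 := by
    refine Finset.sum_eq_zero fun q hq => ?_
    rcases le_or_gt q NF with h | h
    · rw [hG (n - q) (by omega), mul_zero]
    · rw [hF q (by omega), zero_mul]
  have e2 : ∑ q ∈ range K, A.δ₁ ((A.v ^ q) α) * G (n + q + 1) = 0 := by
    refine Finset.sum_eq_zero fun q hq => ?_
    rw [hG (n + q + 1) (by omega), mul_zero]
  have e3 : ∑ q ∈ range K, F (n + q + 1) * B.δ₁ ((B.v ^ q) β) = 0 := by
    refine Finset.sum_eq_zero fun q hq => ?_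
    rw [hF (n + q + 1) (by omega), zero_mul]
  rw [e1, e2, e3]
  simp

lemma E3 (hA : A.IsSComplex) (hB : B.IsSComplex) (α : A.Tot) (β : B.Tot)
    (F G : ℕ → R) (NF NG K : ℕ) (hK : K = NF + NG + 2)
    (hF : ∀ s : ℕ, NF < s → F s = 0) (hG : ∀ t : ℕ, NG < t → G t = 0)
    (hdα : A.d α = ∑ s ∈ range K, F s • uu A s) :
    (TensorProduct.rid R A.Tot)
        (TensorProduct.map A.sign B.δ₁ (xOne A B α β F G K))
      + A.d (xThree A α G K)
    = ∑ k ∈ range K, hFun A B α β F G K k • uu A k := by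
  have h1 : (TensorProduct.rid R A.Tot)
      (TensorProduct.map A.sign B.δ₁ (xOne A B α β F G K))
      = ∑ k ∈ range K, ∑ m ∈ range K,
          (F (k + m + 1) * B.δ₁ ((B.v ^ m) β)) • uu A k := by
    unfold xOne
    simp only [map_add, map_sum, map_smul, TensorProduct.map_tmul, sign_uu hA,
      δ₁_uu hB, TensorProduct.tmul_zero, smul_zero, Finset.sum_const_zero, add_zero,
      TensorProduct.rid_tmul, smul_smul]
  have hd3 : ∀ t ∈ range K, A.d (G t • (A.v ^ t) α)
      = (∑ s ∈ range K, (G t * F s) • uu A (t + s))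
        + ∑ p ∈ range t, (G t * A.δ₁ ((A.v ^ (t - 1 - p)) α)) • uu A p := by
    intro t _
    rw [map_smul, d_pow_exp hA α F K hdα t, smul_add, Finset.smul_sum, Finset.smul_sum]
    congr 1
    · exact Finset.sum_congr rfl fun s _ => smul_smul _ _ _
    · exact Finset.sum_congr rfl fun p _ => smul_smul _ _ _
  have h2 : A.d (xThree A α G K)
      = (∑ n ∈ range K, ∑ s ∈ range (n + 1), (F s * G (n - s)) • uu A n)
        + ∑ p ∈ range K, ∑ q ∈ range K,
            (A.δ₁ ((A.v ^ q) α) * G (p + q + 1)) • uu A p := by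
    unfold xThree
    rw [map_sum, Finset.sum_congr rfl hd3, Finset.sum_add_distrib]
    congr 1
    · rw [sqToTri K (fun t s => (G t * F s) • uu A (t + s)) ?_]
      · refine Finset.sum_congr rfl fun n hn => ?_
        rw [← Finset.sum_range_reflect (fun s => (F s * G (n - s)) • uu A n) (n + 1)]
        refine Finset.sum_congr rfl fun k hk => ?_
        simp only [mem_range] at hk
        have e2 : n + 1 - 1 - k = n - k := by omega
        rw [e2]
        have e1 : k + (n - k) = n := by omega
        rw [e1]
        have e3 : n - (n - k) = k := by omega
        rw [e3, mul_comm]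
      · intro t s h
        show (G t * F s) • uu A (t + s) = 0
        rcases le_or_gt t NG with h' | h'
        · rw [hF s (by omega), mul_zero, zero_smul]
        · rw [hG t (by omega), zero_mul, zero_smul]
    · rw [triRe K (fun t p => (G t * A.δ₁ ((A.v ^ (t - 1 - p)) α)) • uu A p) ?_]
      · refine Finset.sum_congr rfl fun p _ => Finset.sum_congr rfl fun q _ => ?_
        have e : p + q + 1 - 1 - p = q := by omega
        rw [e, mul_comm]
      · intro t p h
        show (G t * A.δ₁ ((A.v ^ (t - 1 - p)) α)) • uu A p = 0
        rw [hG t (by omega), zero_mul, zero_smul]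
  have h3 : ∑ k ∈ range K, hFun A B α β F G K k • uu A k
      = ((∑ n ∈ range K, ∑ s ∈ range (n + 1), (F s * G (n - s)) • uu A n)
          + ∑ p ∈ range K, ∑ q ∈ range K,
              (A.δ₁ ((A.v ^ q) α) * G (p + q + 1)) • uu A p)
        + ∑ k ∈ range K, ∑ m ∈ range K,
            (F (k + m + 1) * B.δ₁ ((B.v ^ m) β)) • uu A k := by
    unfold hFun
    simp only [add_smul, Finset.sum_smul]
    rw [Finset.sum_add_distrib, Finset.sum_add_distrib]
  rw [h1, h2, h3]
  abel

end Witness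

section Witness2
open SComplexData TensorProduct Finset

variable {R : Type u} [CommRing R] {A B : SComplexData R}

lemma sum_sum_add {ι : Type*} {M : Type*} [AddCommMonoid M] (s t : Finset ι)
    (X Y : ι → ι → M) :
    ∑ k ∈ s, ∑ m ∈ t, (X k m + Y k m)
      = (∑ k ∈ s, ∑ m ∈ t, X k m) + ∑ k ∈ s, ∑ m ∈ t, Y k m := by
  rw [← Finset.sum_add_distrib]
  exact Finset.sum_congr rfl fun k _ => Finset.sum_add_distrib

lemma E4 (hA : A.IsSComplex) (hB : B.IsSComplex) (α : A.Tot) (β : B.Tot)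
    (F G : ℕ → R) (NF NG K : ℕ) (hK : K = NF + NG + 2)
    (hF : ∀ s : ℕ, NF < s → F s = 0) (hG : ∀ t : ℕ, NG < t → G t = 0)
    (hdβ : B.d β = ∑ t ∈ range K, G t • uu B t) :
    (TensorProduct.lid R B.Tot)
        (TensorProduct.map A.δ₁ LinearMap.id (xOne A B α β F G K))
      + B.d (xThree B β F K)
    = ∑ k ∈ range K, hFun A B α β F G K k • uu B k := by
  have h1 : (TensorProduct.lid R B.Tot)
      (TensorProduct.map A.δ₁ LinearMap.id (xOne A B α β F G K))
      = ∑ k ∈ range K, ∑ m ∈ range K,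
          (G (k + m + 1) * A.δ₁ ((A.v ^ m) α)) • uu B k := by
    unfold xOne
    simp only [map_add, map_sum, map_smul, TensorProduct.map_tmul, δ₁_uu hA,
      TensorProduct.zero_tmul, smul_zero, Finset.sum_const_zero, add_zero,
      TensorProduct.lid_tmul, LinearMap.id_coe, id_eq, smul_smul, zero_add]
  have hd4 : ∀ t ∈ range K, B.d (F t • (B.v ^ t) β)
      = (∑ s ∈ range K, (F t * G s) • uu B (t + s))
        + ∑ p ∈ range t, (F t * B.δ₁ ((B.v ^ (t - 1 - p)) β)) • uu B p := by
    intro t _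
    rw [map_smul, d_pow_exp hB β G K hdβ t, smul_add, Finset.smul_sum, Finset.smul_sum]
    congr 1
    · exact Finset.sum_congr rfl fun s _ => smul_smul _ _ _
    · exact Finset.sum_congr rfl fun p _ => smul_smul _ _ _
  have h2 : B.d (xThree B β F K)
      = (∑ n ∈ range K, ∑ s ∈ range (n + 1), (F s * G (n - s)) • uu B n)
        + ∑ p ∈ range K, ∑ q ∈ range K,
            (F (p + q + 1) * B.δ₁ ((B.v ^ q) β)) • uu B p := by
    unfold xThree
    rw [map_sum, Finset.sum_congr rfl hd4, Finset.sum_add_distrib]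
    congr 1
    · rw [sqToTri K (fun t s => (F t * G s) • uu B (t + s)) ?_]
      · refine Finset.sum_congr rfl fun n hn => ?_
        refine Finset.sum_congr rfl fun k hk => ?_
        simp only [mem_range] at hk
        show (F k * G (n - k)) • uu B (k + (n - k)) = (F k * G (n - k)) • uu B n
        have e1 : k + (n - k) = n := by omega
        rw [e1]
      · intro t s h
        show (F t * G s) • uu B (t + s) = 0
        rcases le_or_gt t NF with h' | h'
        · rw [hG s (by omega), mul_zero, zero_smul]
        · rw [hF t (by omega), zero_mul, zero_smul]
    · rw [triRe K (fun t p => (F t * B.δ₁ ((B.v ^ (t - 1 - p)) β)) • uu B p) ?_]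
      · refine Finset.sum_congr rfl fun p _ => Finset.sum_congr rfl fun q _ => ?_
        have e : p + q + 1 - 1 - p = q := by omega
        rw [e]
      · intro t p h
        show (F t * B.δ₁ ((B.v ^ (t - 1 - p)) β)) • uu B p = 0
        rw [hF t (by omega), zero_mul, zero_smul]
  have h3 : ∑ k ∈ range K, hFun A B α β F G K k • uu B k
      = ((∑ n ∈ range K, ∑ s ∈ range (n + 1), (F s * G (n - s)) • uu B n)
          + ∑ p ∈ range K, ∑ q ∈ range K,
              (A.δ₁ ((A.v ^ q) α) * G (p + q + 1)) • uu B p)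
        + ∑ k ∈ range K, ∑ m ∈ range K,
            (F (k + m + 1) * B.δ₁ ((B.v ^ m) β)) • uu B k := by
    unfold hFun
    simp only [add_smul, Finset.sum_smul]
    rw [Finset.sum_add_distrib, Finset.sum_add_distrib]
  have h4 : ∑ k ∈ range K, ∑ m ∈ range K,
        (G (k + m + 1) * A.δ₁ ((A.v ^ m) α)) • uu B k
      = ∑ p ∈ range K, ∑ q ∈ range K,
          (A.δ₁ ((A.v ^ q) α) * G (p + q + 1)) • uu B p :=
    Finset.sum_congr rfl fun p _ => Finset.sum_congr rfl fun q _ => by rw [mul_comm]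
  rw [h1, h2, h3, h4]
  abel

lemma E1 (hA : A.IsSComplex) (hB : B.IsSComplex) (α : A.Tot) (β : B.Tot)
    (F G : ℕ → R) (NF NG K : ℕ) (hK : K = NF + NG + 2)
    (hF : ∀ s : ℕ, NF < s → F s = 0) (hG : ∀ t : ℕ, NG < t → G t = 0)
    (hdα : A.d α = ∑ s ∈ range K, F s • uu A s)
    (hdβ : B.d β = ∑ t ∈ range K, G t • uu B t) :
    TensorProduct.map A.d LinearMap.id (xOne A B α β F G K)
      + TensorProduct.map A.sign B.d (xOne A B α β F G K)
    = ∑ k ∈ range K, hFun A B α β F G K k • Sc A B k := by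
  -- the two raw expansions
  have hP1 : TensorProduct.map A.sign B.d (xOne A B α β F G K)
      = (∑ k ∈ range K, ∑ m ∈ range K, ∑ t ∈ range K,
          (F (k + m + 1) * G t) • (uu A k ⊗ₜ[R] uu B (m + t)))
        + ∑ k ∈ range K, ∑ m ∈ range K, ∑ q ∈ range m,
            (F (k + m + 1) * B.δ₁ ((B.v ^ (m - 1 - q)) β)) • (uu A k ⊗ₜ[R] uu B q) := by
    unfold xOne
    rw [map_add]
    have g2 : TensorProduct.map A.sign B.d
        (∑ k ∈ range K, ∑ m ∈ range K, G (k + m + 1) • ((A.v ^ m) α ⊗ₜ[R] uu B k))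
        = 0 := by
      simp only [map_sum, map_smul, TensorProduct.map_tmul, d_uu hB,
        TensorProduct.tmul_zero, smul_zero, Finset.sum_const_zero]
    have g1 : TensorProduct.map A.sign B.d
        (∑ k ∈ range K, ∑ m ∈ range K, F (k + m + 1) • (uu A k ⊗ₜ[R] (B.v ^ m) β))
        = ∑ k ∈ range K, ∑ m ∈ range K,
            F (k + m + 1) • (uu A k ⊗ₜ[R] B.d ((B.v ^ m) β)) := by
      simp only [map_sum, map_smul, TensorProduct.map_tmul, sign_uu hA]
    rw [g1, g2, add_zero]
    have step : ∀ k ∈ range K, ∀ m ∈ range K,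
        F (k + m + 1) • (uu A k ⊗ₜ[R] B.d ((B.v ^ m) β))
        = (∑ t ∈ range K, (F (k + m + 1) * G t) • (uu A k ⊗ₜ[R] uu B (m + t)))
          + ∑ q ∈ range m,
              (F (k + m + 1) * B.δ₁ ((B.v ^ (m - 1 - q)) β)) • (uu A k ⊗ₜ[R] uu B q) := by
      intro k _ m _
      rw [d_pow_exp hB β G K hdβ m, TensorProduct.tmul_add, smul_add,
        TensorProduct.tmul_sum, TensorProduct.tmul_sum, Finset.smul_sum, Finset.smul_sum]
      congr 1 <;> refine Finset.sum_congr rfl fun x _ => ?_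
      · rw [TensorProduct.tmul_smul, smul_smul]
      · rw [TensorProduct.tmul_smul, smul_smul]
    rw [Finset.sum_congr rfl (fun k hk => Finset.sum_congr rfl (step k hk)),
      sum_sum_add]
  have hP3 : TensorProduct.map A.d LinearMap.id (xOne A B α β F G K)
      = (∑ k ∈ range K, ∑ m ∈ range K, ∑ t ∈ range K,
          (G (k + m + 1) * F t) • (uu A (m + t) ⊗ₜ[R] uu B k))
        + ∑ k ∈ range K, ∑ m ∈ range K, ∑ q ∈ range m,
            (G (k + m + 1) * A.δ₁ ((A.v ^ (m - 1 - q)) α)) • (uu A q ⊗ₜ[R] uu B k) := by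
    unfold xOne
    rw [map_add]
    have g1 : TensorProduct.map A.d LinearMap.id
        (∑ k ∈ range K, ∑ m ∈ range K, F (k + m + 1) • (uu A k ⊗ₜ[R] (B.v ^ m) β))
        = 0 := by
      simp only [map_sum, map_smul, TensorProduct.map_tmul, d_uu hA,
        TensorProduct.zero_tmul, smul_zero, Finset.sum_const_zero]
    have g2 : TensorProduct.map A.d LinearMap.id
        (∑ k ∈ range K, ∑ m ∈ range K, G (k + m + 1) • ((A.v ^ m) α ⊗ₜ[R] uu B k))
        = ∑ k ∈ range K, ∑ m ∈ range K,
            G (k + m + 1) • (A.d ((A.v ^ m) α) ⊗ₜ[R] uu B k) := by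
      simp only [map_sum, map_smul, TensorProduct.map_tmul, LinearMap.id_coe, id_eq]
    rw [g1, g2, zero_add]
    have step : ∀ k ∈ range K, ∀ m ∈ range K,
        G (k + m + 1) • (A.d ((A.v ^ m) α) ⊗ₜ[R] uu B k)
        = (∑ t ∈ range K, (G (k + m + 1) * F t) • (uu A (m + t) ⊗ₜ[R] uu B k))
          + ∑ q ∈ range m,
              (G (k + m + 1) * A.δ₁ ((A.v ^ (m - 1 - q)) α)) • (uu A q ⊗ₜ[R] uu B k) := by
      intro k _ m _
      rw [d_pow_exp hA α F K hdα m, TensorProduct.add_tmul, smul_add,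
        TensorProduct.sum_tmul, TensorProduct.sum_tmul, Finset.smul_sum, Finset.smul_sum]
      congr 1 <;> refine Finset.sum_congr rfl fun x _ => ?_
      · rw [← TensorProduct.smul_tmul', smul_smul]
      · rw [← TensorProduct.smul_tmul', smul_smul]
    rw [Finset.sum_congr rfl (fun k hk => Finset.sum_congr rfl (step k hk)),
      sum_sum_add]
  -- canonicalize the four raw sums
  have t1 : (∑ k ∈ range K, ∑ m ∈ range K, ∑ t ∈ range K,
        (F (k + m + 1) * G t) • (uu A k ⊗ₜ[R] uu B (m + t)))
      = ∑ k ∈ range K, ∑ n ∈ range K, ∑ m ∈ range (n + 1),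
          (F (k + m + 1) * G (n - m)) • (uu A k ⊗ₜ[R] uu B n) := by
    refine Finset.sum_congr rfl fun k _ => ?_
    rw [sqToTri K (fun m t => (F (k + m + 1) * G t) • (uu A k ⊗ₜ[R] uu B (m + t))) ?_]
    · refine Finset.sum_congr rfl fun n _ => Finset.sum_congr rfl fun m hm => ?_
      simp only [mem_range] at hm
      show (F (k + m + 1) * G (n - m)) • (uu A k ⊗ₜ[R] uu B (m + (n - m))) = _
      have e : m + (n - m) = n := by omega
      rw [e]
    · intro m t h
      show (F (k + m + 1) * G t) • (uu A k ⊗ₜ[R] uu B (m + t)) = 0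
      rcases le_or_gt t NG with h' | h'
      · rw [hF (k + m + 1) (by omega), zero_mul, zero_smul]
      · rw [hG t (by omega), mul_zero, zero_smul]
  have t2 : (∑ k ∈ range K, ∑ m ∈ range K, ∑ q ∈ range m,
        (F (k + m + 1) * B.δ₁ ((B.v ^ (m - 1 - q)) β)) • (uu A k ⊗ₜ[R] uu B q))
      = ∑ k ∈ range K, ∑ q ∈ range K, ∑ r ∈ range K,
          (F (k + q + r + 2) * B.δ₁ ((B.v ^ r) β)) • (uu A k ⊗ₜ[R] uu B q) := by
    refine Finset.sum_congr rfl fun k _ => ?_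
    rw [triRe K (fun m q => (F (k + m + 1) * B.δ₁ ((B.v ^ (m - 1 - q)) β))
        • (uu A k ⊗ₜ[R] uu B q)) ?_]
    · refine Finset.sum_congr rfl fun q _ => Finset.sum_congr rfl fun r _ => ?_
      show (F (k + (q + r + 1) + 1) * B.δ₁ ((B.v ^ (q + r + 1 - 1 - q)) β))
          • (uu A k ⊗ₜ[R] uu B q) = _
      have e1 : k + (q + r + 1) + 1 = k + q + r + 2 := by omega
      have e2 : q + r + 1 - 1 - q = r := by omega
      rw [e1, e2]
    · intro m q h
      show (F (k + m + 1) * B.δ₁ ((B.v ^ (m - 1 - q)) β)) • (uu A k ⊗ₜ[R] uu B q) = 0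
      rw [hF (k + m + 1) (by omega), zero_mul, zero_smul]
  have t3 : (∑ k ∈ range K, ∑ m ∈ range K, ∑ t ∈ range K,
        (G (k + m + 1) * F t) • (uu A (m + t) ⊗ₜ[R] uu B k))
      = ∑ k ∈ range K, ∑ n ∈ range K, ∑ m ∈ range (n + 1),
          (G (k + m + 1) * F (n - m)) • (uu A n ⊗ₜ[R] uu B k) := by
    refine Finset.sum_congr rfl fun k _ => ?_
    rw [sqToTri K (fun m t => (G (k + m + 1) * F t) • (uu A (m + t) ⊗ₜ[R] uu B k)) ?_]
    · refine Finset.sum_congr rfl fun n _ => Finset.sum_congr rfl fun m hm => ?_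
      simp only [mem_range] at hm
      show (G (k + m + 1) * F (n - m)) • (uu A (m + (n - m)) ⊗ₜ[R] uu B k) = _
      have e : m + (n - m) = n := by omega
      rw [e]
    · intro m t h
      show (G (k + m + 1) * F t) • (uu A (m + t) ⊗ₜ[R] uu B k) = 0
      rcases le_or_gt t NF with h' | h'
      · rw [hG (k + m + 1) (by omega), zero_mul, zero_smul]
      · rw [hF t (by omega), mul_zero, zero_smul]
  have t4 : (∑ k ∈ range K, ∑ m ∈ range K, ∑ q ∈ range m,
        (G (k + m + 1) * A.δ₁ ((A.v ^ (m - 1 - q)) α)) • (uu A q ⊗ₜ[R] uu B k))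
      = ∑ k ∈ range K, ∑ p ∈ range K, ∑ r ∈ range K,
          (G (k + p + r + 2) * A.δ₁ ((A.v ^ r) α)) • (uu A p ⊗ₜ[R] uu B k) := by
    refine Finset.sum_congr rfl fun k _ => ?_
    rw [triRe K (fun m q => (G (k + m + 1) * A.δ₁ ((A.v ^ (m - 1 - q)) α))
        • (uu A q ⊗ₜ[R] uu B k)) ?_]
    · refine Finset.sum_congr rfl fun p _ => Finset.sum_congr rfl fun r _ => ?_
      show (G (k + (p + r + 1) + 1) * A.δ₁ ((A.v ^ (p + r + 1 - 1 - p)) α))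
          • (uu A p ⊗ₜ[R] uu B k) = _
      have e1 : k + (p + r + 1) + 1 = k + p + r + 2 := by omega
      have e2 : p + r + 1 - 1 - p = r := by omega
      rw [e1, e2]
    · intro m q h
      show (G (k + m + 1) * A.δ₁ ((A.v ^ (m - 1 - q)) α)) • (uu A q ⊗ₜ[R] uu B k) = 0
      rw [hG (k + m + 1) (by omega), zero_mul, zero_smul]
  -- canonicalize the right-hand side
  have hR : (∑ k ∈ range K, hFun A B α β F G K k • Sc A B k)
      = ((∑ p ∈ range K, ∑ q ∈ range K, ∑ s ∈ range (p + q + 1 + 1),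
            (F s * G (p + q + 1 - s)) • (uu A p ⊗ₜ[R] uu B q))
          + ∑ p ∈ range K, ∑ q ∈ range K, ∑ r ∈ range K,
              (A.δ₁ ((A.v ^ r) α) * G (p + q + 1 + r + 1)) • (uu A p ⊗ₜ[R] uu B q))
        + ∑ p ∈ range K, ∑ q ∈ range K, ∑ r ∈ range K,
            (F (p + q + 1 + r + 1) * B.δ₁ ((B.v ^ r) β)) • (uu A p ⊗ₜ[R] uu B q) := by
    have s1 : ∀ k ∈ range K, hFun A B α β F G K k • Sc A B k
        = ∑ p ∈ range k, hFun A B α β F G K k • (uu A p ⊗ₜ[R] uu B (k - 1 - p)) := by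
      intro k _
      rw [Sc, Finset.smul_sum]
    rw [Finset.sum_congr rfl s1,
      triRe K (fun n p => hFun A B α β F G K n • (uu A p ⊗ₜ[R] uu B (n - 1 - p))) ?_]
    · have s2 : ∀ p ∈ range K, ∀ q ∈ range K,
          hFun A B α β F G K (p + q + 1) • (uu A p ⊗ₜ[R] uu B (p + q + 1 - 1 - p))
          = (∑ s ∈ range (p + q + 1 + 1),
                (F s * G (p + q + 1 - s)) • (uu A p ⊗ₜ[R] uu B q))
            + (∑ r ∈ range K,
                (A.δ₁ ((A.v ^ r) α) * G (p + q + 1 + r + 1)) • (uu A p ⊗ₜ[R] uu B q))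
            + ∑ r ∈ range K,
                (F (p + q + 1 + r + 1) * B.δ₁ ((B.v ^ r) β)) • (uu A p ⊗ₜ[R] uu B q) := by
        intro p _ q _
        have e : p + q + 1 - 1 - p = q := by omega
        rw [e]
        unfold hFun
        rw [add_smul, add_smul, Finset.sum_smul, Finset.sum_smul, Finset.sum_smul]
      rw [Finset.sum_congr rfl (fun p hp => Finset.sum_congr rfl (s2 p hp))]
      rw [sum_sum_add, sum_sum_add]
    · intro n p h
      show hFun A B α β F G K n • (uu A p ⊗ₜ[R] uu B (n - 1 - p)) = 0
      rw [hFun_vanish α β F G NF NG K hF hG n (by omega), zero_smul]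
  rw [hP3, hP1, t1, t2, t3, t4, hR]
  -- combine the `F·G` pieces via the convolution split
  have c3s : (∑ k ∈ range K, ∑ n ∈ range K, ∑ m ∈ range (n + 1),
        (G (k + m + 1) * F (n - m)) • (uu A n ⊗ₜ[R] uu B k))
      = ∑ n ∈ range K, ∑ k ∈ range K, ∑ m ∈ range (n + 1),
          (G (k + m + 1) * F (n - m)) • (uu A n ⊗ₜ[R] uu B k) :=
    Finset.sum_comm
  have c4s : (∑ k ∈ range K, ∑ p ∈ range K, ∑ r ∈ range K,
        (G (k + p + r + 2) * A.δ₁ ((A.v ^ r) α)) • (uu A p ⊗ₜ[R] uu B k))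
      = ∑ p ∈ range K, ∑ q ∈ range K, ∑ r ∈ range K,
          (A.δ₁ ((A.v ^ r) α) * G (p + q + 1 + r + 1)) • (uu A p ⊗ₜ[R] uu B q) := by
    rw [Finset.sum_comm]
    refine Finset.sum_congr rfl fun p _ => Finset.sum_congr rfl fun q _ =>
      Finset.sum_congr rfl fun r _ => ?_
    have e : q + p + r + 2 = p + q + 1 + r + 1 := by omega
    rw [e, mul_comm]
  have c2s : (∑ k ∈ range K, ∑ q ∈ range K, ∑ r ∈ range K,
        (F (k + q + r + 2) * B.δ₁ ((B.v ^ r) β)) • (uu A k ⊗ₜ[R] uu B q))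
      = ∑ p ∈ range K, ∑ q ∈ range K, ∑ r ∈ range K,
          (F (p + q + 1 + r + 1) * B.δ₁ ((B.v ^ r) β)) • (uu A p ⊗ₜ[R] uu B q) := by
    refine Finset.sum_congr rfl fun p _ => Finset.sum_congr rfl fun q _ =>
      Finset.sum_congr rfl fun r _ => ?_
    have e : p + q + r + 2 = p + q + 1 + r + 1 := by omega
    rw [e]
  rw [c3s, c4s, c2s]
  have key : (∑ p ∈ range K, ∑ q ∈ range K, ∑ m ∈ range (q + 1),
        (F (p + m + 1) * G (q - m)) • (uu A p ⊗ₜ[R] uu B q))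
      + (∑ p ∈ range K, ∑ q ∈ range K, ∑ m ∈ range (p + 1),
          (G (q + m + 1) * F (p - m)) • (uu A p ⊗ₜ[R] uu B q))
      = ∑ p ∈ range K, ∑ q ∈ range K, ∑ s ∈ range (p + q + 1 + 1),
          (F s * G (p + q + 1 - s)) • (uu A p ⊗ₜ[R] uu B q) := by
    rw [← sum_sum_add]
    refine Finset.sum_congr rfl fun p _ => Finset.sum_congr rfl fun q _ => ?_
    rw [← Finset.sum_smul, ← Finset.sum_smul, ← Finset.sum_smul, ← add_smul]
    congr 1
    have e : p + q + 1 + 1 = p + q + 2 := by omega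
    rw [e, convSplit F G p q]
    have e2 : (∑ m ∈ range (p + 1), G (q + m + 1) * F (p - m))
        = ∑ m ∈ range (p + 1), F (p - m) * G (q + m + 1) :=
      Finset.sum_congr rfl fun m _ => mul_comm _ _
    rw [e2, add_comm]
  rw [← key]
  abel

end Witness2

section Witness3
open SComplexData TensorProduct Finset

variable {R : Type u} [CommRing R] {A B : SComplexData R}

lemma E2 (hA : A.IsSComplex) (hB : B.IsSComplex) (α : A.Tot) (β : B.Tot)
    (F G : ℕ → R) (NF NG K : ℕ) (hK : K = NF + NG + 2)
    (hF : ∀ s : ℕ, NF < s → F s = 0) (hG : ∀ t : ℕ, NG < t → G t = 0)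
    (hdα : A.d α = ∑ s ∈ range K, F s • uu A s)
    (hdβ : B.d β = ∑ t ∈ range K, G t • uu B t) :
    (TensorProduct.map A.sign B.v (xOne A B α β F G K)
        - TensorProduct.map (A.sign ∘ₗ A.v) LinearMap.id (xOne A B α β F G K))
      + (TensorProduct.map A.d LinearMap.id (α ⊗ₜ[R] β)
          - TensorProduct.map A.sign B.d (α ⊗ₜ[R] β))
      + TensorProduct.map A.sign B.δ₂
          ((TensorProduct.rid R A.Tot).symm (xThree A α G K))
      - TensorProduct.map A.δ₂ LinearMap.id
          ((TensorProduct.lid R B.Tot).symm (xThree B β F K)) = 0 := by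
  obtain ⟨K', rfl⟩ : ∃ K', K = K' + 1 := ⟨NF + NG + 1, by omega⟩
  set K := K' + 1 with hK'
  have hvpow : ∀ m : ℕ, B.v ((B.v ^ m) β) = (B.v ^ (m + 1)) β := by
    intro m; rw [pow_succ', Module.End.mul_apply]
  have hvpowA : ∀ m : ℕ, A.v ((A.v ^ m) α) = (A.v ^ (m + 1)) α := by
    intro m; rw [pow_succ', Module.End.mul_apply]
  -- expand the five constituents
  have g1 : TensorProduct.map A.sign B.v (xOne A B α β F G K)
      = (∑ k ∈ range K, ∑ m ∈ range K,
          F (k + m + 1) • (uu A k ⊗ₜ[R] (B.v ^ (m + 1)) β))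
        + ∑ k ∈ range K, ∑ m ∈ range K,
            G (k + m + 1) • (A.sign ((A.v ^ m) α) ⊗ₜ[R] uu B (k + 1)) := by
    unfold xOne
    simp only [map_add, map_sum, map_smul, TensorProduct.map_tmul, sign_uu hA,
      hvpow, ← uu_succ]
  have g2 : TensorProduct.map (A.sign ∘ₗ A.v) LinearMap.id (xOne A B α β F G K)
      = (∑ k ∈ range K, ∑ m ∈ range K,
          F (k + m + 1) • (uu A (k + 1) ⊗ₜ[R] (B.v ^ m) β))
        + ∑ k ∈ range K, ∑ m ∈ range K,
            G (k + m + 1) • (A.sign ((A.v ^ (m + 1)) α) ⊗ₜ[R] uu B k) := by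
    unfold xOne
    simp only [map_add, map_sum, map_smul, TensorProduct.map_tmul, LinearMap.id_coe,
      id_eq, LinearMap.comp_apply, hvpowA, ← uu_succ, sign_uu hA]
  have g3 : TensorProduct.map A.sign B.δ₂
      ((TensorProduct.rid R A.Tot).symm (xThree A α G K))
      = ∑ t ∈ range K, G t • (A.sign ((A.v ^ t) α) ⊗ₜ[R] uu B 0) := by
    unfold xThree
    simp only [map_sum, map_smul, TensorProduct.rid_symm_apply,
      TensorProduct.map_tmul, uu_zero]
  have g4 : TensorProduct.map A.δ₂ LinearMap.id
      ((TensorProduct.lid R B.Tot).symm (xThree B β F K))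
      = ∑ s ∈ range K, F s • (uu A 0 ⊗ₜ[R] (B.v ^ s) β) := by
    unfold xThree
    simp only [map_sum, map_smul, TensorProduct.lid_symm_apply,
      TensorProduct.map_tmul, LinearMap.id_coe, id_eq, uu_zero,
      TensorProduct.tmul_smul]
  have g5 : TensorProduct.map A.d LinearMap.id (α ⊗ₜ[R] β)
        - TensorProduct.map A.sign B.d (α ⊗ₜ[R] β)
      = (∑ s ∈ range K, F s • (uu A s ⊗ₜ[R] β))
        - ∑ t ∈ range K, G t • (A.sign α ⊗ₜ[R] uu B t) := by
    rw [TensorProduct.map_tmul, TensorProduct.map_tmul, LinearMap.id_coe, id_eq,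
      hdα, hdβ, TensorProduct.sum_tmul, TensorProduct.tmul_sum]
    simp only [← TensorProduct.smul_tmul', TensorProduct.tmul_smul]
  rw [g1, g2, g3, g4, g5]
  -- telescoping for the F–family
  have TF : (∑ k ∈ range K, ∑ m ∈ range K,
        F (k + m + 1) • (uu A k ⊗ₜ[R] (B.v ^ (m + 1)) β))
      - (∑ k ∈ range K, ∑ m ∈ range K,
          F (k + m + 1) • (uu A (k + 1) ⊗ₜ[R] (B.v ^ m) β))
      = (∑ n ∈ range K, F (n + 1) • (uu A 0 ⊗ₜ[R] (B.v ^ (n + 1)) β))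
        - ∑ n ∈ range K, F (n + 1) • (uu A (n + 1) ⊗ₜ[R] (B.v ^ 0) β) := by
    rw [sqToTri K (fun k m => F (k + m + 1) • (uu A k ⊗ₜ[R] (B.v ^ (m + 1)) β))
        (fun k m h => by
          show F (k + m + 1) • (uu A k ⊗ₜ[R] (B.v ^ (m + 1)) β) = 0
          rw [hF (k + m + 1) (by omega), zero_smul]),
      sqToTri K (fun k m => F (k + m + 1) • (uu A (k + 1) ⊗ₜ[R] (B.v ^ m) β))
        (fun k m h => by
          show F (k + m + 1) • (uu A (k + 1) ⊗ₜ[R] (B.v ^ m) β) = 0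
          rw [hF (k + m + 1) (by omega), zero_smul]),
      ← Finset.sum_sub_distrib, ← Finset.sum_sub_distrib]
    refine Finset.sum_congr rfl fun n _ => ?_
    rw [← Finset.sum_sub_distrib]
    have inner : ∀ k ∈ range (n + 1),
        F (k + (n - k) + 1) • (uu A k ⊗ₜ[R] (B.v ^ (n - k + 1)) β)
          - F (k + (n - k) + 1) • (uu A (k + 1) ⊗ₜ[R] (B.v ^ (n - k)) β)
        = (fun k => F (n + 1) • (uu A k ⊗ₜ[R] (B.v ^ (n + 1 - k)) β)) k
          - (fun k => F (n + 1) • (uu A k ⊗ₜ[R] (B.v ^ (n + 1 - k)) β)) (k + 1) := by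
      intro k hk
      simp only [mem_range] at hk
      have e1 : k + (n - k) + 1 = n + 1 := by omega
      have e2 : n - k + 1 = n + 1 - k := by omega
      have e3 : n - k = n + 1 - (k + 1) := by omega
      rw [e1, e2, e3]
    rw [Finset.sum_congr rfl inner,
      Finset.sum_range_sub' (fun k => F (n + 1) • (uu A k ⊗ₜ[R] (B.v ^ (n + 1 - k)) β))
        (n + 1)]
    have e4 : n + 1 - (n + 1) = 0 := by omega
    have e5 : n + 1 - 0 = n + 1 := by omega
    rw [e4, e5]
  -- telescoping for the G–family
  have TG : (∑ k ∈ range K, ∑ m ∈ range K,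
        G (k + m + 1) • (A.sign ((A.v ^ m) α) ⊗ₜ[R] uu B (k + 1)))
      - (∑ k ∈ range K, ∑ m ∈ range K,
          G (k + m + 1) • (A.sign ((A.v ^ (m + 1)) α) ⊗ₜ[R] uu B k))
      = (∑ n ∈ range K, G (n + 1) • (A.sign ((A.v ^ 0) α) ⊗ₜ[R] uu B (n + 1)))
        - ∑ n ∈ range K, G (n + 1) • (A.sign ((A.v ^ (n + 1)) α) ⊗ₜ[R] uu B 0) := by
    rw [sqToTri K (fun k m => G (k + m + 1) • (A.sign ((A.v ^ m) α) ⊗ₜ[R] uu B (k + 1)))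
        (fun k m h => by
          show G (k + m + 1) • (A.sign ((A.v ^ m) α) ⊗ₜ[R] uu B (k + 1)) = 0
          rw [hG (k + m + 1) (by omega), zero_smul]),
      sqToTri K (fun k m => G (k + m + 1) • (A.sign ((A.v ^ (m + 1)) α) ⊗ₜ[R] uu B k))
        (fun k m h => by
          show G (k + m + 1) • (A.sign ((A.v ^ (m + 1)) α) ⊗ₜ[R] uu B k) = 0
          rw [hG (k + m + 1) (by omega), zero_smul]),
      ← Finset.sum_sub_distrib, ← Finset.sum_sub_distrib]
    refine Finset.sum_congr rfl fun n _ => ?_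
    rw [← Finset.sum_sub_distrib]
    have inner : ∀ k ∈ range (n + 1),
        G (k + (n - k) + 1) • (A.sign ((A.v ^ (n - k)) α) ⊗ₜ[R] uu B (k + 1))
          - G (k + (n - k) + 1) • (A.sign ((A.v ^ (n - k + 1)) α) ⊗ₜ[R] uu B k)
        = (fun k => G (n + 1) • (A.sign ((A.v ^ (n + 1 - k)) α) ⊗ₜ[R] uu B k)) (k + 1)
          - (fun k => G (n + 1) • (A.sign ((A.v ^ (n + 1 - k)) α) ⊗ₜ[R] uu B k)) k := by
      intro k hk
      simp only [mem_range] at hk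
      have e1 : k + (n - k) + 1 = n + 1 := by omega
      have e2 : n - k = n + 1 - (k + 1) := by omega
      have e3 : n - k + 1 = n + 1 - k := by omega
      rw [e1, e3, e2]
    rw [Finset.sum_congr rfl inner,
      Finset.sum_range_sub (fun k => G (n + 1) • (A.sign ((A.v ^ (n + 1 - k)) α) ⊗ₜ[R] uu B k))
        (n + 1)]
    have e4 : n + 1 - (n + 1) = 0 := by omega
    have e5 : n + 1 - 0 = n + 1 := by omega
    rw [e4, e5]
  -- rearrange and cancel
  have arr : ∀ P1 P2 Q1 Q2 S T U V : A.Tot ⊗[R] B.Tot,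
      (P1 + Q1 - (P2 + Q2)) + (S - T) + U - V
        = ((P1 - P2) + S - V) + ((Q1 - Q2) - T + U) := by
    intros; abel
  rw [arr, TF, TG]
  have hzF : (∑ n ∈ range K, F (n + 1) • (uu A 0 ⊗ₜ[R] (B.v ^ (n + 1)) β))
      - (∑ n ∈ range K, F (n + 1) • (uu A (n + 1) ⊗ₜ[R] (B.v ^ 0) β))
      + (∑ s ∈ range K, F s • (uu A s ⊗ₜ[R] β))
      - (∑ s ∈ range K, F s • (uu A 0 ⊗ₜ[R] (B.v ^ s) β)) = 0 := by
    rw [Finset.sum_range_succ' (fun s => F s • (uu A s ⊗ₜ[R] β)) K',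
      Finset.sum_range_succ' (fun s => F s • (uu A 0 ⊗ₜ[R] (B.v ^ s) β)) K']
    rw [Finset.sum_range_succ (fun n => F (n + 1) • (uu A 0 ⊗ₜ[R] (B.v ^ (n + 1)) β)) K',
      Finset.sum_range_succ (fun n => F (n + 1) • (uu A (n + 1) ⊗ₜ[R] (B.v ^ 0) β)) K']
    rw [hF (K' + 1) (by omega)]
    have ev0 : ∀ x : B.Tot, (B.v ^ 0) x = x := fun x => by
      rw [pow_zero, Module.End.one_apply]
    simp only [ev0, zero_smul, add_zero]
    abel
  have hzG : (∑ n ∈ range K, G (n + 1) • (A.sign ((A.v ^ 0) α) ⊗ₜ[R] uu B (n + 1)))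
      - (∑ n ∈ range K, G (n + 1) • (A.sign ((A.v ^ (n + 1)) α) ⊗ₜ[R] uu B 0))
      - (∑ t ∈ range K, G t • (A.sign α ⊗ₜ[R] uu B t))
      + (∑ t ∈ range K, G t • (A.sign ((A.v ^ t) α) ⊗ₜ[R] uu B 0)) = 0 := by
    rw [Finset.sum_range_succ' (fun t => G t • (A.sign α ⊗ₜ[R] uu B t)) K',
      Finset.sum_range_succ' (fun t => G t • (A.sign ((A.v ^ t) α) ⊗ₜ[R] uu B 0)) K']
    rw [Finset.sum_range_succ (fun n => G (n + 1) • (A.sign ((A.v ^ 0) α) ⊗ₜ[R] uu B (n + 1))) K',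
      Finset.sum_range_succ (fun n => G (n + 1) • (A.sign ((A.v ^ (n + 1)) α) ⊗ₜ[R] uu B 0)) K']
    rw [hG (K' + 1) (by omega)]
    have ev0 : ∀ x : A.Tot, (A.v ^ 0) x = x := fun x => by
      rw [pow_zero, Module.End.one_apply]
    simp only [ev0, zero_smul, add_zero]
    abel
  rw [hzF, hzG, add_zero]

end Witness3

section Witness4
open SComplexData TensorProduct Finset

variable {R : Type u} [CommRing R] {A B : SComplexData R}

/-- Fourth component of `(v^⊗)^m` applied to the witness. -/
noncomputable def xFourEv (A B : SComplexData R) (α : A.Tot) (β : B.Tot)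
    (F : ℕ → R) (K m : ℕ) : B.Tot :=
  (B.v ^ m) (xThree B β F K)
    + ∑ p ∈ range m, A.δ₁ ((A.v ^ (m - 1 - p)) α) • (B.v ^ p) β

lemma TVpow (α : A.Tot) (β : B.Tot) (F G : ℕ → R) (K : ℕ)
    (x1 : A.Tot ⊗[R] B.Tot) (m : ℕ) :
    ∃ y, ((tensorS A B).v ^ m)
        ((x1, α ⊗ₜ[R] β, xThree A α G K, xThree B β F K) : TTen A B)
      = (y, (A.v ^ m) α ⊗ₜ[R] β, (A.v ^ m) (xThree A α G K),
          xFourEv A B α β F K m) := by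
  induction m with
  | zero =>
    refine ⟨x1, ?_⟩
    simp only [pow_zero, Module.End.one_apply, xFourEv, range_zero, sum_empty, add_zero]
    rfl
  | succ m ih =>
    obtain ⟨y, hy⟩ := ih
    have h1 : ((tensorS A B).v ^ (m + 1))
          ((x1, α ⊗ₜ[R] β, xThree A α G K, xThree B β F K) : TTen A B)
        = (tensorS A B).v (((tensorS A B).v ^ m)
            ((x1, α ⊗ₜ[R] β, xThree A α G K, xThree B β F K) : TTen A B)) := by
      rw [pow_succ']
      rfl
    rw [h1, hy, tensorS_v_apply]
    refine ⟨TensorProduct.map A.v LinearMap.id y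
      + TensorProduct.map A.δ₂ LinearMap.id
          ((TensorProduct.lid R B.Tot).symm (xFourEv A B α β F K m)), ?_⟩
    refine Prod.ext rfl (Prod.ext ?_ (Prod.ext ?_ ?_))
    · show TensorProduct.map A.v LinearMap.id ((A.v ^ m) α ⊗ₜ[R] β)
          = (A.v ^ (m + 1)) α ⊗ₜ[R] β
      rw [TensorProduct.map_tmul, LinearMap.id_coe, id_eq, ← Module.End.mul_apply,
        ← pow_succ']
    · show A.v ((A.v ^ m) (xThree A α G K)) = (A.v ^ (m + 1)) (xThree A α G K)
      rw [← Module.End.mul_apply, ← pow_succ']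
    · show (TensorProduct.lid R B.Tot)
            (TensorProduct.map A.δ₁ LinearMap.id ((A.v ^ m) α ⊗ₜ[R] β))
          + B.v (xFourEv A B α β F K m) = xFourEv A B α β F K (m + 1)
      rw [TensorProduct.map_tmul, LinearMap.id_coe, id_eq, TensorProduct.lid_tmul]
      unfold xFourEv
      rw [map_add, map_sum]
      have e1 : ∀ p ∈ range m,
          B.v (A.δ₁ ((A.v ^ (m - 1 - p)) α) • (B.v ^ p) β)
          = A.δ₁ ((A.v ^ (m + 1 - 1 - (p + 1))) α) • (B.v ^ (p + 1)) β := by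
        intro p hp
        rw [map_smul, ← Module.End.mul_apply, ← pow_succ']
        have e : m + 1 - 1 - (p + 1) = m - 1 - p := by omega
        rw [e]
      rw [Finset.sum_congr rfl e1,
        Finset.sum_range_succ'
          (fun p => A.δ₁ ((A.v ^ (m + 1 - 1 - p)) α) • (B.v ^ p) β) m]
      have e2 : m + 1 - 1 - 0 = m := by omega
      rw [e2, ← Module.End.mul_apply, ← pow_succ']
      have e3 : (B.v ^ 0) β = β := by rw [pow_zero, Module.End.one_apply]
      rw [e3]
      abel

lemma E5 (α : A.Tot) (β : B.Tot) (F G : ℕ → R) (K : ℕ)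
    (x1 : A.Tot ⊗[R] B.Tot) (m : ℕ) :
    (tensorS A B).δ₁ (((tensorS A B).v ^ m)
        ((x1, α ⊗ₜ[R] β, xThree A α G K, xThree B β F K) : TTen A B))
      = (∑ t ∈ range K, G t * A.δ₁ ((A.v ^ (m + t)) α))
        + (∑ s ∈ range K, F s * B.δ₁ ((B.v ^ (m + s)) β))
        + ∑ p ∈ range m, A.δ₁ ((A.v ^ (m - 1 - p)) α) * B.δ₁ ((B.v ^ p) β) := by
  obtain ⟨y, hy⟩ := TVpow α β F G K x1 m
  rw [hy, tensorS_δ₁_apply]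
  have h3 : A.δ₁ ((A.v ^ m) (xThree A α G K))
      = ∑ t ∈ range K, G t * A.δ₁ ((A.v ^ (m + t)) α) := by
    unfold xThree
    rw [map_sum, map_sum]
    refine Finset.sum_congr rfl fun t _ => ?_
    rw [map_smul, ← Module.End.mul_apply, ← pow_add, map_smul, smul_eq_mul]
  have h4 : B.δ₁ (xFourEv A B α β F K m)
      = (∑ s ∈ range K, F s * B.δ₁ ((B.v ^ (m + s)) β))
        + ∑ p ∈ range m, A.δ₁ ((A.v ^ (m - 1 - p)) α) * B.δ₁ ((B.v ^ p) β) := by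
    unfold xFourEv
    rw [map_add, map_sum]
    congr 1
    · unfold xThree
      rw [map_sum, map_sum]
      refine Finset.sum_congr rfl fun s _ => ?_
      rw [map_smul, ← Module.End.mul_apply, ← pow_add, map_smul, smul_eq_mul]
    · refine Finset.sum_congr rfl fun p _ => ?_
      rw [map_smul, smul_eq_mul]
  show A.δ₁ ((A.v ^ m) (xThree A α G K)) + B.δ₁ (xFourEv A B α β F K m) = _
  rw [h3, h4, add_assoc]

end Witness4

section Scalar
open Finset

variable {R : Type u} [CommRing R]

lemma SposVan (F G aa bb : ℕ → R) (i j : ℤ) (K : ℕ)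
    (hFz : ∀ s : ℕ, -i < (s : ℤ) → F s = 0) (hGz : ∀ t : ℕ, -j < (t : ℤ) → G t = 0)
    (haa : ∀ q : ℕ, (q : ℤ) < i - 1 → aa q = 0)
    (hbb : ∀ q : ℕ, (q : ℤ) < j - 1 → bb q = 0)
    (n : ℕ) (hn : -i - j < (n : ℤ)) :
    (∑ s ∈ range (n + 1), F s * G (n - s))
      + (∑ q ∈ range K, aa q * G (n + q + 1))
      + (∑ q ∈ range K, F (n + q + 1) * bb q) = 0 := by
  have e1 : ∑ s ∈ range (n + 1), F s * G (n - s) = 0 := by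
    refine Finset.sum_eq_zero fun s hs => ?_
    simp only [mem_range] at hs
    rcases lt_or_ge (-i) (s : ℤ) with h | h
    · rw [hFz s h, zero_mul]
    · rw [hGz (n - s) (by omega), mul_zero]
  have e2 : ∑ q ∈ range K, aa q * G (n + q + 1) = 0 := by
    refine Finset.sum_eq_zero fun q _ => ?_
    rcases lt_or_ge (q : ℤ) (i - 1) with h | h
    · rw [haa q h, zero_mul]
    · rw [hGz (n + q + 1) (by omega), mul_zero]
  have e3 : ∑ q ∈ range K, F (n + q + 1) * bb q = 0 := by
    refine Finset.sum_eq_zero fun q _ => ?_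
    rcases lt_or_ge (q : ℤ) (j - 1) with h | h
    · rw [hbb q h, mul_zero]
    · rw [hFz (n + q + 1) (by omega), zero_mul]
  rw [e1, e2, e3, add_zero, add_zero]

lemma SnegVan (F G aa bb : ℕ → R) (i j : ℤ) (K : ℕ)
    (hFz : ∀ s : ℕ, -i < (s : ℤ) → F s = 0) (hGz : ∀ t : ℕ, -j < (t : ℤ) → G t = 0)
    (haa : ∀ q : ℕ, (q : ℤ) < i - 1 → aa q = 0)
    (hbb : ∀ q : ℕ, (q : ℤ) < j - 1 → bb q = 0)
    (m : ℕ) (hm : (m : ℤ) < i + j - 1) :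
    (∑ t ∈ range K, G t * aa (m + t))
      + (∑ s ∈ range K, F s * bb (m + s))
      + (∑ p ∈ range m, aa (m - 1 - p) * bb p) = 0 := by
  have e1 : ∑ t ∈ range K, G t * aa (m + t) = 0 := by
    refine Finset.sum_eq_zero fun t _ => ?_
    rcases lt_or_ge (-j) (t : ℤ) with h | h
    · rw [hGz t h, zero_mul]
    · rw [haa (m + t) (by omega), mul_zero]
  have e2 : ∑ s ∈ range K, F s * bb (m + s) = 0 := by
    refine Finset.sum_eq_zero fun s _ => ?_
    rcases lt_or_ge (-i) (s : ℤ) with h | h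
    · rw [hFz s h, zero_mul]
    · rw [hbb (m + s) (by omega), mul_zero]
  have e3 : ∑ p ∈ range m, aa (m - 1 - p) * bb p = 0 := by
    refine Finset.sum_eq_zero fun p hp => ?_
    simp only [mem_range] at hp
    rcases lt_or_ge (p : ℤ) (j - 1) with h | h
    · rw [hbb p h, mul_zero]
    · rw [haa (m - 1 - p) (by omega), zero_mul]
  rw [e1, e2, e3, add_zero, add_zero]

lemma SvalPos (F G aa bb : ℕ → R) (i j : ℤ) (K : ℕ)
    (hK : (-i).toNat + (-j).toNat + 2 = K)
    (hFz : ∀ s : ℕ, -i < (s : ℤ) → F s = 0) (hGz : ∀ t : ℕ, -j < (t : ℤ) → G t = 0)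
    (haa : ∀ q : ℕ, (q : ℤ) < i - 1 → aa q = 0)
    (hbb : ∀ q : ℕ, (q : ℤ) < j - 1 → bb q = 0)
    (hij : i + j ≤ 0) :
    (∑ s ∈ range ((-i - j).toNat + 1), F s * G ((-i - j).toNat - s))
      + (∑ q ∈ range K, aa q * G ((-i - j).toNat + q + 1))
      + (∑ q ∈ range K, F ((-i - j).toNat + q + 1) * bb q)
    = (if 0 < i then aa ((i - 1).toNat) else F ((-i).toNat))
        * (if 0 < j then bb ((j - 1).toNat) else G ((-j).toNat)) := by
  set n : ℕ := (-i - j).toNat with hn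
  by_cases hi : 0 < i
  · -- then j < 0; the second sum carries the value
    have hj : ¬ 0 < j := by omega
    rw [if_pos hi, if_neg hj]
    have e1 : ∑ s ∈ range (n + 1), F s * G (n - s) = 0 :=
      Finset.sum_eq_zero fun s _ => by rw [hFz s (by omega), zero_mul]
    have e3 : ∑ q ∈ range K, F (n + q + 1) * bb q = 0 :=
      Finset.sum_eq_zero fun q _ => by rw [hFz (n + q + 1) (by omega), zero_mul]
    have e2 : ∑ q ∈ range K, aa q * G (n + q + 1)
        = aa ((i - 1).toNat) * G ((-j).toNat) := by
      rw [Finset.sum_eq_single_of_mem ((i - 1).toNat) (mem_range.mpr (by omega))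
        (fun q _ hq => ?_)]
      · have e : n + (i - 1).toNat + 1 = (-j).toNat := by omega
        rw [e]
      · rcases lt_or_ge (q : ℤ) (i - 1) with h | h
        · rw [haa q h, zero_mul]
        · rw [hGz (n + q + 1) (by omega), mul_zero]
    rw [e1, e2, e3, add_zero, zero_add]
  · rw [if_neg hi]
    by_cases hj : 0 < j
    · -- then i < 0; the third sum carries the value
      rw [if_pos hj]
      have e1 : ∑ s ∈ range (n + 1), F s * G (n - s) = 0 :=
        Finset.sum_eq_zero fun s _ => by rw [hGz (n - s) (by omega), mul_zero]
      have e2 : ∑ q ∈ range K, aa q * G (n + q + 1) = 0 :=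
        Finset.sum_eq_zero fun q _ => by rw [hGz (n + q + 1) (by omega), mul_zero]
      have e3 : ∑ q ∈ range K, F (n + q + 1) * bb q
          = F ((-i).toNat) * bb ((j - 1).toNat) := by
        rw [Finset.sum_eq_single_of_mem ((j - 1).toNat) (mem_range.mpr (by omega))
          (fun q _ hq => ?_)]
        · have e : n + (j - 1).toNat + 1 = (-i).toNat := by omega
          rw [e]
        · rcases lt_or_ge (q : ℤ) (j - 1) with h | h
          · rw [hbb q h, mul_zero]
          · rw [hFz (n + q + 1) (by omega), zero_mul]
      rw [e1, e2, e3, zero_add, zero_add]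
    · -- i ≤ 0 and j ≤ 0; the first sum carries the value
      rw [if_neg hj]
      have e2 : ∑ q ∈ range K, aa q * G (n + q + 1) = 0 :=
        Finset.sum_eq_zero fun q _ => by rw [hGz (n + q + 1) (by omega), mul_zero]
      have e3 : ∑ q ∈ range K, F (n + q + 1) * bb q = 0 :=
        Finset.sum_eq_zero fun q _ => by rw [hFz (n + q + 1) (by omega), zero_mul]
      have e1 : ∑ s ∈ range (n + 1), F s * G (n - s)
          = F ((-i).toNat) * G ((-j).toNat) := by
        rw [Finset.sum_eq_single_of_mem ((-i).toNat) (mem_range.mpr (by omega))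
          (fun s hs hq => ?_)]
        · have e : n - (-i).toNat = (-j).toNat := by omega
          rw [e]
        · simp only [mem_range] at hs
          rcases lt_or_ge (-i) (s : ℤ) with h | h
          · rw [hFz s h, zero_mul]
          · rw [hGz (n - s) (by omega), mul_zero]
      rw [e1, e2, e3, add_zero, add_zero]

end Scalar

section Scalar2
open Finset

variable {R : Type u} [CommRing R]

lemma SvalNeg (F G aa bb : ℕ → R) (i j : ℤ) (K : ℕ)
    (hK : (-i).toNat + (-j).toNat + 2 = K)
    (hFz : ∀ s : ℕ, -i < (s : ℤ) → F s = 0) (hGz : ∀ t : ℕ, -j < (t : ℤ) → G t = 0)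
    (haa : ∀ q : ℕ, (q : ℤ) < i - 1 → aa q = 0)
    (hbb : ∀ q : ℕ, (q : ℤ) < j - 1 → bb q = 0)
    (hij : 1 ≤ i + j) :
    (∑ t ∈ range K, G t * aa ((i + j - 1).toNat + t))
      + (∑ s ∈ range K, F s * bb ((i + j - 1).toNat + s))
      + (∑ p ∈ range ((i + j - 1).toNat), aa ((i + j - 1).toNat - 1 - p) * bb p)
    = (if 0 < i then aa ((i - 1).toNat) else F ((-i).toNat))
        * (if 0 < j then bb ((j - 1).toNat) else G ((-j).toNat)) := by
  set m : ℕ := (i + j - 1).toNat with hm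
  by_cases hi : 0 < i
  · rw [if_pos hi]
    have e2 : ∑ s ∈ range K, F s * bb (m + s) = 0 :=
      Finset.sum_eq_zero fun s _ => by rw [hFz s (by omega), zero_mul]
    by_cases hj : 0 < j
    · -- value carried by the third sum
      rw [if_pos hj]
      have e1 : ∑ t ∈ range K, G t * aa (m + t) = 0 :=
        Finset.sum_eq_zero fun t _ => by rw [hGz t (by omega), zero_mul]
      have e3 : ∑ p ∈ range m, aa (m - 1 - p) * bb p
          = aa ((i - 1).toNat) * bb ((j - 1).toNat) := by
        rw [Finset.sum_eq_single_of_mem ((j - 1).toNat) (mem_range.mpr (by omega))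
          (fun p hp hq => ?_)]
        · have e : m - 1 - (j - 1).toNat = (i - 1).toNat := by omega
          rw [e]
        · simp only [mem_range] at hp
          rcases lt_or_ge (p : ℤ) (j - 1) with h | h
          · rw [hbb p h, mul_zero]
          · rw [haa (m - 1 - p) (by omega), zero_mul]
      rw [e1, e2, e3, zero_add, zero_add]
    · -- value carried by the first sum
      rw [if_neg hj]
      have e3 : ∑ p ∈ range m, aa (m - 1 - p) * bb p = 0 := by
        refine Finset.sum_eq_zero fun p hp => ?_
        simp only [mem_range] at hp
        rw [haa (m - 1 - p) (by omega), zero_mul]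
      have e1 : ∑ t ∈ range K, G t * aa (m + t)
          = aa ((i - 1).toNat) * G ((-j).toNat) := by
        rw [Finset.sum_eq_single_of_mem ((-j).toNat) (mem_range.mpr (by omega))
          (fun t _ hq => ?_)]
        · have e : m + (-j).toNat = (i - 1).toNat := by omega
          rw [e, mul_comm]
        · rcases lt_or_ge (-j) (t : ℤ) with h | h
          · rw [hGz t h, zero_mul]
          · rw [haa (m + t) (by omega), mul_zero]
      rw [e1, e2, e3, add_zero, add_zero]
  · -- i ≤ 0, hence j > 0; value carried by the second sum
    have hj : 0 < j := by omega
    rw [if_neg hi, if_pos hj]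
    have e1 : ∑ t ∈ range K, G t * aa (m + t) = 0 :=
      Finset.sum_eq_zero fun t _ => by rw [hGz t (by omega), zero_mul]
    have e3 : ∑ p ∈ range m, aa (m - 1 - p) * bb p = 0 := by
      refine Finset.sum_eq_zero fun p hp => ?_
      simp only [mem_range] at hp
      rw [hbb p (by omega), mul_zero]
    have e2 : ∑ s ∈ range K, F s * bb (m + s)
        = F ((-i).toNat) * bb ((j - 1).toNat) := by
      rw [Finset.sum_eq_single_of_mem ((-i).toNat) (mem_range.mpr (by omega))
        (fun s _ hq => ?_)]
      · have e : m + (-i).toNat = (j - 1).toNat := by omega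
        rw [e]
      · rcases lt_or_ge (-i) (s : ℤ) with h | h
        · rw [hFz s h, zero_mul]
        · rw [hbb (m + s) (by omega), mul_zero]
    rw [e1, e2, e3, add_zero, zero_add]

end Scalar2

end SC10

open Finset TensorProduct SC10

open SComplexData in
/-- **Statement 10.** For S-complexes over an integral domain and `i, j ∈ ℤ`:
`J_i(C̃) · J_j(C̃') ⊆ J_{i+j}(C̃ ⊗ C̃')`. -/
theorem statement10 {R : Type u} [CommRing R] [IsDomain R]
    (A B : SComplexData R) (hA : A.IsSComplex) (hB : B.IsSComplex) (i j : ℤ) :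
    ∀ a ∈ A.Jideal i, ∀ b ∈ B.Jideal j, a * b ∈ (tensorS A B).Jideal (i + j) := by
  intro a ha b hb
  obtain ⟨QA, hQAmem, hvanA, hvalA⟩ := ha
  obtain ⟨zA, hzA, hQAeq⟩ := hQAmem
  obtain ⟨QB, hQBmem, hvanB, hvalB⟩ := hb
  obtain ⟨zB, hzB, hQBeq⟩ := hQBmem
  subst hQAeq
  subst hQBeq
  have hzA' : A.smallD zA = 0 := hzA
  have hzB' : B.smallD zB = 0 := hzB
  -- coefficient data
  set F : ℕ → R := fun s => zA.2.1 s with hFdef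
  set G : ℕ → R := fun t => zB.2.1 t with hGdef
  set NF : ℕ := (-i).toNat with hNF
  set NG : ℕ := (-j).toNat with hNG
  set K : ℕ := NF + NG + 2 with hKdef
  have hiotaA : ∀ m : ℤ, (A.iota zA).1 m
      = if m < 0 then A.δ₁ ((A.v ^ (-m - 1).toNat) zA.1) else zA.2.1 m.toNat :=
    fun m => rfl
  have hiotaB : ∀ m : ℤ, (B.iota zB).1 m
      = if m < 0 then B.δ₁ ((B.v ^ (-m - 1).toNat) zB.1) else zB.2.1 m.toNat :=
    fun m => rfl
  have hFz : ∀ s : ℕ, -i < (s : ℤ) → F s = 0 := by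
    intro s hs
    have h := hvanA s hs
    rw [hiotaA, if_neg (by omega)] at h
    simpa using h
  have hGz : ∀ t : ℕ, -j < (t : ℤ) → G t = 0 := by
    intro t ht
    have h := hvanB t ht
    rw [hiotaB, if_neg (by omega)] at h
    simpa using h
  have haaz : ∀ q : ℕ, (q : ℤ) < i - 1 → A.δ₁ ((A.v ^ q) zA.1) = 0 := by
    intro q hq
    have h := hvanA (-(q : ℤ) - 1) (by omega)
    rw [hiotaA, if_pos (by omega)] at h
    have e : (-(-(q : ℤ) - 1) - 1).toNat = q := by omega
    rw [e] at h
    exact h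
  have hbbz : ∀ q : ℕ, (q : ℤ) < j - 1 → B.δ₁ ((B.v ^ q) zB.1) = 0 := by
    intro q hq
    have h := hvanB (-(q : ℤ) - 1) (by omega)
    rw [hiotaB, if_pos (by omega)] at h
    have e : (-(-(q : ℤ) - 1) - 1).toNat = q := by omega
    rw [e] at h
    exact h
  have hAval : (if 0 < i then A.δ₁ ((A.v ^ (i - 1).toNat) zA.1)
      else F ((-i).toNat)) = a := by
    by_cases hi : 0 < i
    · rw [if_pos hi]
      have h := hvalA
      rw [hiotaA, if_pos (by omega)] at h
      have e : (-(-i) - 1).toNat = (i - 1).toNat := by omega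
      rw [e] at h
      exact h
    · rw [if_neg hi]
      have h := hvalA
      rw [hiotaA, if_neg (by omega)] at h
      exact h
  have hBval : (if 0 < j then B.δ₁ ((B.v ^ (j - 1).toNat) zB.1)
      else G ((-j).toNat)) = b := by
    by_cases hj : 0 < j
    · rw [if_pos hj]
      have h := hvalB
      rw [hiotaB, if_pos (by omega)] at h
      have e : (-(-j) - 1).toNat = (j - 1).toNat := by omega
      rw [e] at h
      exact h
    · rw [if_neg hj]
      have h := hvalB
      rw [hiotaB, if_neg (by omega)] at h
      exact h
  have hF : ∀ s : ℕ, NF < s → F s = 0 := fun s hs => hFz s (by omega)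
  have hG : ∀ t : ℕ, NG < t → G t = 0 := fun t ht => hGz t (by omega)
  -- the differentials
  have hdA : A.d zA.1 = A.sumV zA.2 := by
    have h : A.d zA.1 - A.sumV zA.2 = 0 := congrArg Prod.fst hzA'
    exact sub_eq_zero.mp h
  have hdB : B.d zB.1 = B.sumV zB.2 := by
    have h : B.d zB.1 - B.sumV zB.2 = 0 := congrArg Prod.fst hzB'
    exact sub_eq_zero.mp h
  have hdαF : A.d zA.1 = ∑ s ∈ range K, F s • uu A s := by
    rw [hdA, sumV_eq A zA.2 K (fun n hn => hFz n (by omega))]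
  have hdβG : B.d zB.1 = ∑ t ∈ range K, G t • uu B t := by
    rw [hdB, sumV_eq B zB.2 K (fun n hn => hGz n (by omega))]
  -- the witness
  set hh : ↥(NatBdd R R) := ⟨fun n => hFun A B zA.1 zB.1 F G K n,
    ⟨NF + NG, fun n hn => hFun_vanish zA.1 zB.1 F G NF NG K hF hG n hn⟩⟩ with hhdef
  set ξ : TTen A B := (xOne A B zA.1 zB.1 F G K, zA.1 ⊗ₜ[R] zB.1,
    xThree A zA.1 G K, xThree B zB.1 F K) with hξdef
  have hker : (tensorS A B).d ξ = (tensorS A B).sumV hh := by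
    rw [tensorS_d_apply, tensorS_sumV A B hh K
      (fun n hn => hFun_vanish zA.1 zB.1 F G NF NG K hF hG n (by omega))]
    refine Prod.ext ?_ (Prod.ext ?_ (Prod.ext ?_ ?_))
    · exact E1 hA hB zA.1 zB.1 F G NF NG K rfl hF hG hdαF hdβG
    · exact E2 hA hB zA.1 zB.1 F G NF NG K rfl hF hG hdαF hdβG
    · exact E3 hA hB zA.1 zB.1 F G NF NG K rfl hF hG hdαF
    · exact E4 hA hB zA.1 zB.1 F G NF NG K rfl hF hG hdβG
  have hkers : (tensorS A B).smallD (ξ, hh) = 0 := by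
    have h0 : (tensorS A B).smallD (ξ, hh)
        = ((tensorS A B).d ξ - (tensorS A B).sumV hh, 0) := rfl
    rw [h0, hker, sub_self]
    rfl
  have hiotaT : ∀ m : ℤ, ((tensorS A B).iota (ξ, hh)).1 m
      = if m < 0 then (tensorS A B).δ₁ (((tensorS A B).v ^ (-m - 1).toNat) ξ)
        else hh.1 m.toNat := fun m => rfl
  refine ⟨(tensorS A B).iota (ξ, hh), ⟨(ξ, hh), hkers, rfl⟩, ?_, ?_⟩
  · -- vanishing above degree -(i+j)
    intro m hm
    rw [hiotaT]
    by_cases hneg : m < 0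
    · rw [if_pos hneg, hξdef, E5 zA.1 zB.1 F G K _ ((-m - 1).toNat)]
      exact SnegVan F G (fun q => A.δ₁ ((A.v ^ q) zA.1))
        (fun q => B.δ₁ ((B.v ^ q) zB.1)) i j K hFz hGz haaz hbbz
        ((-m - 1).toNat) (by omega)
    · rw [if_neg hneg]
      show hFun A B zA.1 zB.1 F G K m.toNat = 0
      unfold hFun
      exact SposVan F G (fun q => A.δ₁ ((A.v ^ q) zA.1))
        (fun q => B.δ₁ ((B.v ^ q) zB.1)) i j K hFz hGz haaz hbbz
        m.toNat (by omega)
  · -- the top coefficient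
    rw [hiotaT]
    by_cases hneg : -(i + j) < 0
    · rw [if_pos hneg]
      have e : (-(-(i + j)) - 1).toNat = (i + j - 1).toNat := by omega
      rw [e, hξdef, E5 zA.1 zB.1 F G K _ ((i + j - 1).toNat)]
      exact (SvalNeg F G (fun q => A.δ₁ ((A.v ^ q) zA.1))
        (fun q => B.δ₁ ((B.v ^ q) zB.1)) i j K rfl hFz hGz haaz hbbz
        (by omega)).trans (by rw [hAval, hBval])
    · rw [if_neg hneg]
      show hFun A B zA.1 zB.1 F G K (-(i + j)).toNat = a * b
      have e : (-(i + j)).toNat = (-i - j).toNat := by omega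
      rw [e]
      unfold hFun
      exact (SvalPos F G (fun q => A.δ₁ ((A.v ^ q) zA.1))
        (fun q => B.δ₁ ((B.v ^ q) zB.1)) i j K rfl hFz hGz haaz hbbz
        (by omega)).trans (by rw [hAval, hBval])
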